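/- arXiv:2010.10394 — 13 statements merged into one kernel-verified Lean document; each statement's English description precedes it below -/
import Mathlib

section
/- Let λ < κ be infinite cardinals with cf(λ) > ω and cf(κ) ≠ cf(λ). Then every bipartite graph (A,B) with |A| = λ, |B| = κ, in which every vertex of B has infinitely many neighbours in A, contains a subgraph (A',B') with A' ⊆ A, B' ⊆ B, |A'| = λ' for some cardinal λ' < λ, |B'| = κ, and every vertex of B' has infinitely many neighbours in A'. -/
open Cardinal Ordinal Set

theorem stmt_0 {α β : Type u} (E : α → β → Prop)
    (lam kap : Cardinal.{u})
    (hlam_inf : ℵ₀ ≤ lam) (hlt : lam < kap)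
    (hcof_lam : ℵ₀ < lam.ord.cof)
    (hcof_ne : kap.ord.cof ≠ lam.ord.cof)
    (hA : #α = lam) (hB : #β = kap)
    (hE : ∀ b : β, {a : α | E a b}.Infinite) :
    ∃ (A' : Set α) (B' : Set β) (lam' : Cardinal.{u}),
      lam' < lam ∧ #A' = lam' ∧ #B' = kap ∧
      ∀ b ∈ B', {a : α | a ∈ A' ∧ E a b}.Infinite := by
  classical
  haveI iwl : IsWellOrder lam.ord.ToType (· < ·) := isWellOrder_lt
  haveI iwk : IsWellOrder kap.ord.ToType (· < ·) := isWellOrder_lt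
  have lamlim : Order.IsSuccLimit lam.ord := Cardinal.isSuccLimit_ord hlam_inf
  have hT : #α = #(lam.ord.ToType) := by
    rw [Cardinal.mk_toType, Cardinal.card_ord, hA]
  obtain ⟨f⟩ : Nonempty (α ≃ lam.ord.ToType) := Cardinal.eq.1 hT
  set t : lam.ord.ToType → Ordinal.{u} :=
    fun x => typein (α := lam.ord.ToType) (· < ·) x with ht
  -- countable sets of neighbours
  have nb : ∀ b : β, ℕ ↪ {a : α | E a b} := fun b => (hE b).natEmbedding _
  -- bound for each b
  have hsb : ∀ b : β, (⨆ n : ℕ, t (f (nb b n)) + 1) < lam.ord := by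
    intro b
    refine Ordinal.iSup_lt_ord_lift ?_ fun n => ?_
    · rwa [Cardinal.mk_nat, Cardinal.lift_aleph0]
    · rw [Ordinal.add_one_eq_succ]
      exact lamlim.succ_lt (typein_lt_self _)
  set H : β → lam.ord.ToType := fun b =>
    enum (α := lam.ord.ToType) (· < ·)
      ⟨⨆ n : ℕ, t (f (nb b n)) + 1, by rw [type_toType]; exact hsb b⟩ with hH
  have htH : ∀ b, t (H b) = ⨆ n : ℕ, t (f (nb b n)) + 1 := fun b => typein_enum _ _
  have hmem : ∀ b n, f (nb b n) < H b := by
    intro b n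
    have h1 : t (f (nb b n)) + 1 ≤ t (H b) := by
      rw [htH]
      exact Ordinal.le_iSup (fun n => t (f (nb b n)) + 1) n
    have h2 : t (f (nb b n)) < t (H b) := lt_of_lt_of_le (by
      rw [Ordinal.add_one_eq_succ]; exact Order.lt_succ _) h1
    exact (typein_lt_typein _).1 h2
  have gmono : ∀ {x y : lam.ord.ToType}, x ≤ y →
      #{b : β | H b ≤ x} ≤ #{b : β | H b ≤ y} := by
    intro x y hxy
    exact mk_le_mk_of_subset fun b hb => le_trans hb hxy
  -- main claim: some level already has kap many b's
  obtain ⟨o, ho⟩ : ∃ o : lam.ord.ToType, #{b : β | H b ≤ o} = kap := by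
    by_contra hcon
    push_neg at hcon
    have hlt' : ∀ o : lam.ord.ToType, #{b : β | H b ≤ o} < kap := fun o =>
      lt_of_le_of_ne (hB ▸ mk_set_le _) (hcon o)
    obtain ⟨S, hSu, hScard⟩ := Order.exists_cof_eq lam.ord.ToType
    rw [Ordinal.cof_toType] at hScard
    haveI : Nonempty lam.ord.ToType := by
      rw [toType_nonempty_iff_ne_zero]
      exact lamlim.ne_zero
    haveI : Nonempty S := by
      obtain ⟨x, hx, -⟩ := hSu (Classical.arbitrary _)
      exact ⟨⟨x, hx⟩⟩
    set g : lam.ord.ToType → Cardinal.{u} := fun o => #{b : β | H b ≤ o} with hg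
    have hbdd : BddAbove (range fun o : S => g o) :=
      Cardinal.bddAbove_range _
    have hsum : kap ≤ Cardinal.sum fun o : S => g o := by
      have hcover : (Set.univ : Set β) ⊆ ⋃ o : S, {b : β | H b ≤ (o : lam.ord.ToType)} := by
        intro b _
        obtain ⟨x, hx, hnx⟩ := hSu (H b)
        exact Set.mem_iUnion.2 ⟨⟨x, hx⟩, hnx⟩
      calc kap = #β := hB.symm
        _ = #(Set.univ : Set β) := mk_univ.symm
        _ ≤ #(⋃ o : S, {b : β | H b ≤ (o : lam.ord.ToType)}) := mk_le_mk_of_subset hcover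
        _ ≤ _ := mk_iUnion_le_sum_mk
    have hkapM : kap ≤ ⨆ o : S, g o := by
      by_contra hMlt
      push_neg at hMlt
      have h1 : Cardinal.sum (fun o : S => g o) ≤ #S * ⨆ o : S, g o :=
        Cardinal.sum_le_mk_mul_iSup _
      have h2 : #S * (⨆ o : S, g o) ≤ max (max (#S) (⨆ o : S, g o)) ℵ₀ :=
        Cardinal.mul_le_max _ _
      have hSlt : #S < kap := by
        rw [hScard]
        calc lam.ord.cof ≤ lam.ord.card := Ordinal.cof_le_card _
          _ = lam := card_ord lam
          _ < kap := hlt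
      have : kap < kap :=
        lt_of_le_of_lt (hsum.trans (h1.trans h2))
          (max_lt (max_lt hSlt hMlt) (lt_of_le_of_lt hlam_inf hlt))
      exact absurd this (lt_irrefl _)
    have hMeq : (⨆ o : S, g o) = kap :=
      le_antisymm (ciSup_le' fun o => (hlt' o).le) hkapM
    -- cf(kap) ≤ cf(lam)
    have hC : kap.ord.cof ≤ lam.ord.cof := by
      by_contra hc
      push_neg at hc
      have hslt : (⨆ o : S, (g o).ord) < kap.ord := by
        refine Ordinal.iSup_lt_ord ?_ fun o => Cardinal.ord_lt_ord.2 (hlt' o)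
        rw [hScard]; exact hc
      have h2 : kap ≤ (⨆ o : S, (g o).ord).card := by
        rw [← hMeq]
        refine ciSup_le' fun o => ?_
        calc g o = ((g o).ord).card := (card_ord _).symm
          _ ≤ _ := Ordinal.card_le_card (Ordinal.le_iSup _ o)
      exact absurd (Cardinal.lt_ord.1 hslt) (not_lt.2 h2)
    -- cf(lam) ≤ cf(kap)
    have hD : lam.ord.cof ≤ kap.ord.cof := by
      obtain ⟨U, hUu, hUcard⟩ := Order.exists_cof_eq kap.ord.ToType
      rw [Ordinal.cof_toType] at hUcard
      have hex : ∀ u : U,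
          ∃ oS : S, (typein (α := kap.ord.ToType) (· < ·) u.1).card < g oS := by
        intro u
        have hcu : (typein (α := kap.ord.ToType) (· < ·) u.1).card < kap :=
          Cardinal.lt_ord.1 (typein_lt_self _)
        exact (lt_ciSup_iff hbdd).1 (lt_of_lt_of_le hcu hkapM)
      choose O hO using hex
      have hRu : Set.Unbounded (· < ·)
          (range fun u : U => (O u : lam.ord.ToType)) := by
        intro x
        have hgx : (g x).ord < kap.ord := Cardinal.ord_lt_ord.2 (hlt' x)
        obtain ⟨u, huU, hu⟩ := hUu (enum (α := kap.ord.ToType) (· < ·)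
          ⟨(g x).ord, by rw [type_toType]; exact hgx⟩)
        have hyu := hu
        have hle : g x ≤ (typein (α := kap.ord.ToType) (· < ·) u).card := by
          have h3 : typein (α := kap.ord.ToType) (· < ·) (enum (α := kap.ord.ToType) (· < ·)
              ⟨(g x).ord, by rw [type_toType]; exact hgx⟩)
              ≤ typein (α := kap.ord.ToType) (· < ·) u :=
            (typein_le_typein' _).2 hyu
          replace h3 := (typein_enum _ _).symm.trans_le h3
          calc g x = ((g x).ord).card := (card_ord _).symm
            _ ≤ _ := Ordinal.card_le_card h3
        refine ⟨O ⟨u, huU⟩, mem_range_self _, ?_⟩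
        intro hlt2
        exact absurd (hO ⟨u, huU⟩) (not_lt.2 ((gmono hlt2.le).trans hle))
      have h4 := Order.cof_le (s := range fun u : U => (O u : lam.ord.ToType))
        (fun x => let ⟨b, hb, h⟩ := hRu x; ⟨b, hb, not_lt.1 h⟩)
      rw [Ordinal.cof_toType] at h4
      exact h4.trans (mk_range_le.trans_eq hUcard)
    exact hcof_ne (le_antisymm hC hD)
  -- build the subgraph
  refine ⟨{a : α | f a ≤ o}, {b : β | H b ≤ o}, #{a : α | f a ≤ o}, ?_, rfl, ho, ?_⟩
  · -- #A' < lam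
    have hemb : Nonempty ({a : α | f a ≤ o} ↪ (Set.Iio (Order.succ (t o)) : Set Ordinal.{u})) := by
      refine ⟨⟨fun a => ⟨t (f a.1), ?_⟩, ?_⟩⟩
      · have h5 : t (f a.1) ≤ t o := (typein_le_typein' _).2 a.2
        exact lt_of_le_of_lt h5 (Order.lt_succ _)
      · intro a a' haa
        have h5 : t (f a.1) = t (f a'.1) := congrArg Subtype.val haa
        exact Subtype.ext (f.injective (typein_injective _ h5))
    have h6 := Cardinal.lift_mk_le'.2 hemb
    rw [Ordinal.mk_Iio_ordinal, Cardinal.lift_lift, Cardinal.lift_le] at h6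
    have h7 : (Order.succ (t o)).card < lam :=
      Cardinal.lt_ord.1 (lamlim.succ_lt (typein_lt_self _))
    exact lt_of_le_of_lt h6 h7
  · intro b hb
    refine Set.infinite_of_injective_forall_mem
      (f := fun n : ℕ => ((nb b n : {a : α | E a b}) : α)) ?_ ?_
    · intro n m hnm
      exact (nb b).injective (Subtype.coe_injective hnm)
    · intro n
      exact ⟨le_of_lt (lt_of_lt_of_le (hmem b n) hb), (nb b n).2⟩
end

section
/- Every (λ,κ)-graph with κ ≤ ℵ_ω contains an (ℵ₀,κ)-subgraph; i.e., if λ < κ ≤ ℵ_ω are infinite cardinals and (A,B) is bipartite with |A| = λ, |B| = κ and every vertex of B having infinitely many neighbours in A, then there are a countable A' ⊆ A and B' ⊆ B with |B'| = κ such that every vertex of B' has infinitely many neighbours in A'. -/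
open Cardinal Set

universe u

lemma aux_step_bound {n : ℕ} :
    (Cardinal.aleph (n + 1 : ℕ)) = Order.succ (Cardinal.aleph n) := by
  rw [show ((n + 1 : ℕ) : Ordinal) = Order.succ (n : Ordinal) by simp, Cardinal.aleph_succ]

lemma bounded_of_countable (c : Cardinal.{u}) (hreg : c.IsRegular) (hc : ℵ₀ < c)
    (S : Set c.ord.ToType) (hS : S.Countable) : ∃ x, ∀ y ∈ S, y < x := by
  haveI : IsWellOrder c.ord.ToType (· < ·) := isWellOrder_lt
  have h1 : #S < Ordinal.cof (Ordinal.type (α := c.ord.ToType) (· < ·)) := by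
    rw [Ordinal.type_toType, hreg.cof_eq]
    exact lt_of_le_of_lt (Cardinal.mk_le_aleph0_iff.mpr hS.to_subtype) hc
  by_contra hne
  push_neg at hne
  exact absurd (Order.cof_le (s := S) fun a => by obtain ⟨y, hy, h⟩ := hne a; exact ⟨y, hy, h⟩)
    (not_le.mpr (by simpa only [Ordinal.cof_type] using h1))

lemma aux_main : ∀ (n : ℕ) {α β : Type u} (E : α → β → Prop) (kap : Cardinal.{u}),
    #α ≤ Cardinal.aleph n → #α < kap → kap ≤ Cardinal.aleph Ordinal.omega0 → #β = kap →
    (∀ b : β, {a : α | E a b}.Infinite) →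
    ∃ (A' : Set α) (B' : Set β), A'.Countable ∧ #B' = kap ∧
      ∀ b ∈ B', {a : α | a ∈ A' ∧ E a b}.Infinite := by
  intro n
  induction n with
  | zero =>
    intro α β E kap hα _ _ hβ hE
    have : Countable α := by
      rw [← Cardinal.mk_le_aleph0_iff]
      simpa using hα
    exact ⟨Set.univ, Set.univ, Set.countable_univ, by rwa [Cardinal.mk_univ],
      fun b _ => by simpa using hE b⟩
  | succ n IH =>
    intro α β E kap hα hαk hkap hβ hE
    by_cases hsm : #α ≤ Cardinal.aleph n
    · exact IH E kap hsm hαk hkap hβ hE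
    push_neg at hsm
    have hαeq : #α = Cardinal.aleph (n + 1 : ℕ) :=
      le_antisymm hα (by rw [aux_step_bound]; exact Order.succ_le_of_lt hsm)
    have hreg : (Cardinal.aleph (n + 1 : ℕ)).IsRegular := by
      rw [aux_step_bound]; exact Cardinal.isRegular_succ (Cardinal.aleph0_le_aleph _)
    have h2 : ℵ₀ < Cardinal.aleph (n + 1 : ℕ) :=
      lt_of_le_of_lt (Cardinal.aleph0_le_aleph (n : Ordinal))
        (Cardinal.aleph_lt_aleph.mpr (by exact_mod_cast Nat.lt_succ_self n))
    have hlk : Cardinal.aleph (n + 1 : ℕ) < kap := hαeq ▸ hαk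
    have h0k : ℵ₀ < kap := lt_of_le_of_lt (Cardinal.aleph0_le_aleph _) hlk
    have hTmk : #(Cardinal.aleph (n + 1 : ℕ)).ord.ToType = Cardinal.aleph (n + 1 : ℕ) := by
      rw [Cardinal.mk_toType, Cardinal.card_ord]
    obtain ⟨e⟩ : Nonempty (α ≃ (Cardinal.aleph (n + 1 : ℕ)).ord.ToType) :=
      Cardinal.eq.mp (by rw [hαeq, hTmk])
    -- choose for each b a bound below which it has infinitely many neighbours
    have hFex : ∀ b : β, ∃ x : (Cardinal.aleph (n + 1 : ℕ)).ord.ToType,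
        {a : α | E a b ∧ e a < x}.Infinite := by
      intro b
      set g := (hE b).natEmbedding with hg
      obtain ⟨x, hx⟩ := bounded_of_countable _ hreg h2
        (Set.range fun k => e (g k)) (Set.countable_range _)
      refine ⟨x, ?_⟩
      apply Set.infinite_of_injective_forall_mem (f := fun k => (g k : α))
      · exact Subtype.val_injective.comp g.injective
      · intro k
        exact ⟨(g k).2, hx _ (Set.mem_range_self k)⟩
    choose F hF using hFex
    -- key counting claim
    have key : ∀ μ : Cardinal.{u}, ℵ₀ ≤ μ → μ < kap →
        ∃ x, Order.succ μ ≤ #{b : β | F b ≤ x} := by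
      intro μ hμ0 hμk
      by_contra hcon
      push_neg at hcon
      have hfib : ∀ x, #{b : β | F b = x} ≤ μ := by
        intro x
        refine le_trans (Cardinal.mk_le_mk_of_subset ?_) (Order.lt_succ_iff.mp (hcon x))
        intro b hb
        exact le_of_eq hb
      have hinj : #β ≤ Cardinal.sum fun x : (Cardinal.aleph (n + 1 : ℕ)).ord.ToType =>
          #{b : β | F b = x} := by
        rw [← Cardinal.mk_sigma]
        exact Cardinal.mk_le_of_injective (f := fun b => ⟨F b, b, rfl⟩)
          (fun b1 b2 h =>
            congrArg (fun p : Σ x, {b : β | F b = x} => (p.2 : β)) h)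
      have hle : #β ≤ #(Cardinal.aleph (n + 1 : ℕ)).ord.ToType * μ := by
        refine hinj.trans ?_
        rw [← Cardinal.sum_const']
        exact Cardinal.sum_le_sum _ _ hfib
      rw [hβ, hTmk] at hle
      exact absurd hle (not_le.mpr (Cardinal.mul_lt_of_lt h0k.le hlk hμk))
    -- find a single bound capturing kap-many b's
    have main : ∃ x, kap ≤ #{b : β | F b ≤ x} := by
      rcases lt_or_eq_of_le hkap with hlt' | heq
      · obtain ⟨oo, rfl⟩ := Cardinal.mem_range_aleph_iff.mpr h0k.le
        obtain ⟨m, rfl⟩ := Ordinal.lt_omega0.mp (Cardinal.aleph_lt_aleph.mp hlt')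
        have hm : n + 1 < m := by exact_mod_cast Cardinal.aleph_lt_aleph.mp hlk
        obtain ⟨m', rfl⟩ : ∃ m', m = m' + 1 := ⟨m - 1, by omega⟩
        obtain ⟨x, hx⟩ := key (Cardinal.aleph m') (Cardinal.aleph0_le_aleph _)
          (Cardinal.aleph_lt_aleph.mpr (by exact_mod_cast Nat.lt_succ_self m'))
        exact ⟨x, by rwa [aux_step_bound]⟩
      · choose xs hxs using fun m : ℕ => key (Cardinal.aleph m) (Cardinal.aleph0_le_aleph _)
          (heq ▸ Cardinal.aleph_lt_aleph.mpr (Ordinal.nat_lt_omega0 m))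
        obtain ⟨x, hx⟩ := bounded_of_countable _ hreg h2 (Set.range xs) (Set.countable_range _)
        refine ⟨x, ?_⟩
        rw [heq, Cardinal.aleph_limit Ordinal.isSuccLimit_omega0]
        apply ciSup_le'
        rintro ⟨a, ha⟩
        obtain ⟨m, rfl⟩ := Ordinal.lt_omega0.mp ha
        calc Cardinal.aleph m ≤ Order.succ (Cardinal.aleph m) := Order.le_succ _
          _ ≤ #{b : β | F b ≤ xs m} := hxs m
          _ ≤ #{b : β | F b ≤ x} := Cardinal.mk_le_mk_of_subset
              (fun b hb => le_trans hb (le_of_lt (hx _ (Set.mem_range_self m))))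
    obtain ⟨x0, hx0⟩ := main
    have hBs : #{b : β | F b ≤ x0} = kap := le_antisymm (hβ ▸ Cardinal.mk_set_le _) hx0
    have hAs : #{a : α | e a ≤ x0} ≤ Cardinal.aleph n := by
      have h1 : #(Set.Iio x0) < Cardinal.aleph (n + 1 : ℕ) := Cardinal.mk_Iio_ord_toType x0
      have h3 : #(Set.Iio x0) ≤ Cardinal.aleph n :=
        Order.lt_succ_iff.mp (lt_of_lt_of_le h1 (le_of_eq aux_step_bound))
      have h2' : #(Set.Iic x0) ≤ Cardinal.aleph n := by
        rw [← Set.Iio_insert]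
        refine le_trans Cardinal.mk_insert_le ?_
        calc #(Set.Iio x0) + 1 ≤ Cardinal.aleph n + 1 := add_le_add_left h3 1
          _ = Cardinal.aleph n := Cardinal.add_one_eq (Cardinal.aleph0_le_aleph _)
      have h4 : #{a : α | e a ≤ x0} = #(Set.Iic x0) := by
        have him : e '' {a : α | e a ≤ x0} = Set.Iic x0 := by
          rw [show {a : α | e a ≤ x0} = e ⁻¹' (Set.Iic x0) from rfl]
          exact Set.image_preimage_eq _ e.surjective
        rw [← him, Cardinal.mk_image_eq e.injective]
      rw [h4]; exact h2'
    -- set up restricted graph and apply IH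
    have hE' : ∀ b : {b : β | F b ≤ x0},
        {a : {a : α | e a ≤ x0} | E a.1 b.1}.Infinite := by
      rintro ⟨b, hb⟩
      haveI hS := (hF b).to_subtype
      refine Set.infinite_coe_iff.mp (Infinite.of_injective
        (fun a : {a : α | E a b ∧ e a < F b} =>
          (⟨⟨a.1, le_of_lt (lt_of_lt_of_le a.2.2 hb)⟩, a.2.1⟩ :
            {a : {a : α | e a ≤ x0} | E a.1 b}))
        (fun a1 a2 h => Subtype.ext (congrArg (fun p => p.1.1) h)))
    obtain ⟨A'', B'', hA''c, hB''k, hprop⟩ :=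
      IH (α := {a : α | e a ≤ x0}) (β := {b : β | F b ≤ x0})
        (fun a b => E a.1 b.1) kap hAs
        (lt_of_le_of_lt hAs (lt_trans (Cardinal.aleph_lt_aleph.mpr
          (by exact_mod_cast Nat.lt_succ_self n)) hlk))
        hkap hBs hE'
    refine ⟨Subtype.val '' A'', Subtype.val '' B'', hA''c.image _, ?_, ?_⟩
    · rw [Cardinal.mk_image_eq Subtype.val_injective, hB''k]
    · rintro b ⟨b0, hb0, rfl⟩
      have hinf := hprop b0 hb0
      refine (hinf.image (Set.injOn_of_injective Subtype.val_injective)).mono ?_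
      rintro a ⟨a0, ha0, rfl⟩
      exact ⟨⟨a0, ha0.1, rfl⟩, ha0.2⟩

theorem stmt_1 {α β : Type u} (E : α → β → Prop)
    (lam kap : Cardinal.{u})
    (hlam_inf : ℵ₀ ≤ lam) (hlt : lam < kap)
    (hkap : kap ≤ Cardinal.aleph Ordinal.omega0)
    (hA : #α = lam) (hB : #β = kap)
    (hE : ∀ b : β, {a : α | E a b}.Infinite) :
    ∃ (A' : Set α) (B' : Set β),
      A'.Countable ∧ #B' = kap ∧
      ∀ b ∈ B', {a : α | a ∈ A' ∧ E a b}.Infinite := by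
  obtain ⟨o, rfl⟩ := Cardinal.mem_range_aleph_iff.mpr hlam_inf
  obtain ⟨m, rfl⟩ := Ordinal.lt_omega0.mp
    (Cardinal.aleph_lt_aleph.mp (lt_of_lt_of_le hlt hkap))
  exact aux_main m E kap hA.le (hA ▸ hlt) hkap hB hE
end

section
/- Assume GCH. Let λ < cf(κ) be cardinals with λ > ℵ₀ and with cf(κ) not of the form μ⁺ for any cardinal μ of countable cofinality. Then every (λ,κ)-graph contains a (λ',κ)-subgraph for some cardinal λ' < λ. -/
open Cardinal

/-- Under GCH, if `ℵ₀ < lam` and the cofinality of `lam` is uncountable, then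
`lam ^ ℵ₀ ≤ lam`. -/
lemma pow_aleph0_le_of_gch {lam : Cardinal.{u}}
    (hGCH : ∀ c : Cardinal.{u}, ℵ₀ ≤ c → (2 : Cardinal.{u}) ^ c = Order.succ c)
    (hlam : ℵ₀ < lam) (hcf : ℵ₀ < lam.ord.cof) : lam ^ ℵ₀ ≤ lam := by
  haveI : IsWellOrder lam.ord.ToType (· < ·) := isWellOrder_lt
  have hγ : #lam.ord.ToType = lam := by rw [Cardinal.mk_toType, Cardinal.card_ord]
  have key : #(ℕ → lam.ord.ToType) ≤ lam := by
    set S : lam.ord.ToType → Set (ℕ → lam.ord.ToType) := fun c => {f | ∀ n, f n < c} with hS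
    have hcover : (⋃ c, S c) = Set.univ := by
      apply Set.eq_univ_of_forall
      intro f
      have hb : Set.Bounded (· < ·) (Set.range f) := by
        apply not_isCofinal_iff.1
        intro hcof
        have hle := Order.cof_le hcof
        rw [Ordinal.cof_toType] at hle
        exact absurd (hle.trans (Set.countable_range f).le_aleph0) (not_le.2 hcf)
      obtain ⟨c, hc⟩ := hb
      exact Set.mem_iUnion.2 ⟨c, fun n => hc (f n) (Set.mem_range_self n)⟩
    have hSc : ∀ c : lam.ord.ToType, #(S c) ≤ lam := by
      intro c
      have h1 : #(S c) ≤ #(ℕ → Set.Iio c) := by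
        apply mk_le_of_injective (f := fun (f : S c) (n : ℕ) => (⟨f.1 n, f.2 n⟩ : Set.Iio c))
        intro f g h
        ext n
        exact congrArg Subtype.val (congrFun h n)
      have h2 : #(Set.Iio c) < lam := Cardinal.mk_Iio_ord_toType c
      set m := max #(Set.Iio c) ℵ₀ with hm
      have hm0 : ℵ₀ ≤ m := le_max_right _ _
      have hmlt : m < lam := max_lt h2 hlam
      have h3 : #(ℕ → Set.Iio c) ≤ m ^ m := by
        rw [Cardinal.mk_arrow, Cardinal.lift_id', mk_nat, Cardinal.lift_aleph0]
        calc #(Set.Iio c) ^ (ℵ₀ : Cardinal.{u}) ≤ m ^ (ℵ₀ : Cardinal.{u}) :=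
              power_le_power_right (le_max_left _ _)
          _ ≤ m ^ m := power_le_power_left (aleph0_pos.trans_le hm0).ne' hm0
      have h4 : m ^ m = Order.succ m := by rw [power_self_eq hm0, hGCH m hm0]
      calc #(S c) ≤ m ^ m := h1.trans h3
        _ = Order.succ m := h4
        _ ≤ lam := Order.succ_le_of_lt hmlt
    calc #(ℕ → lam.ord.ToType) = #(⋃ c, S c) := by rw [hcover, Cardinal.mk_univ]
      _ ≤ #lam.ord.ToType * ⨆ c, #(S c) := mk_iUnion_le S
      _ ≤ lam * lam := by
          apply mul_le_mul' hγ.le (ciSup_le' hSc)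
      _ = lam := mul_eq_self hlam.le
  calc lam ^ ℵ₀ = #(ℕ → lam.ord.ToType) := by
        rw [Cardinal.mk_arrow, Cardinal.lift_id', mk_nat, Cardinal.lift_aleph0, hγ]
    _ ≤ lam := key

theorem stmt_2 {α β : Type u} (E : α → β → Prop)
    (hGCH : ∀ c : Cardinal.{u}, ℵ₀ ≤ c → (2 : Cardinal.{u}) ^ c = Order.succ c)
    (lam kap : Cardinal.{u})
    (hlam : ℵ₀ < lam) (hlt : lam < kap.ord.cof)
    (hshape : ¬ ∃ μ : Cardinal.{u}, μ.ord.cof = ℵ₀ ∧ kap.ord.cof = Order.succ μ)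
    (hA : #α = lam) (hB : #β = kap)
    (hE : ∀ b : β, {a : α | E a b}.Infinite) :
    ∃ (A' : Set α) (B' : Set β) (lam' : Cardinal.{u}),
      lam' < lam ∧ #A' = lam' ∧ #B' = kap ∧
      ∀ b ∈ B', {a : α | a ∈ A' ∧ E a b}.Infinite := by
  -- Step 1: `lam ^ ℵ₀ < kap.ord.cof`.
  have hsucc : Order.succ lam ≤ kap.ord.cof := Order.succ_le_of_lt hlt
  have hpowlam : lam ^ ℵ₀ ≤ lam ^ lam :=
    power_le_power_left (aleph0_pos.trans hlam).ne' hlam.le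
  have h2lam : lam ^ lam = Order.succ lam := by
    rw [power_self_eq hlam.le, hGCH lam hlam.le]
  have hkey : lam ^ ℵ₀ < kap.ord.cof := by
    rcases lt_or_eq_of_le hsucc with h | h
    · exact lt_of_le_of_lt (hpowlam.trans h2lam.le) h
    · -- `kap.ord.cof = succ lam`; then `cf lam ≠ ℵ₀` by `hshape`.
      have hcfne : lam.ord.cof ≠ ℵ₀ := fun hc => hshape ⟨lam, hc, h.symm⟩
      have hcfge : ℵ₀ ≤ lam.ord.cof :=
        Ordinal.aleph0_le_cof.2 (Cardinal.isSuccLimit_ord hlam.le)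
      have hcf : ℵ₀ < lam.ord.cof := lt_of_le_of_ne hcfge (Ne.symm hcfne)
      have := pow_aleph0_le_of_gch hGCH hlam hcf
      calc lam ^ ℵ₀ ≤ lam := this
        _ < Order.succ lam := Order.lt_succ lam
        _ = kap.ord.cof := h
  -- Step 2: pigeonhole.
  have hkap : ℵ₀ < kap := hlam.trans (hlt.trans_le (Ordinal.cof_ord_le kap))
  have hβ : ℵ₀ ≤ #β := by
    rw [hB]
    exact hkap.le
  let f : β → (ℕ → α) := fun b n => (Set.Infinite.natEmbedding _ (hE b) n : α)
  have hf_inj : ∀ b, Function.Injective (f b) := by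
    intro b x y h
    exact (Set.Infinite.natEmbedding _ (hE b)).injective (Subtype.val_injective h)
  have hf_mem : ∀ b n, E (f b n) b := fun b n => (Set.Infinite.natEmbedding _ (hE b) n).2
  have hcard : #(ℕ → α) < (#β).ord.cof := by
    rw [Cardinal.mk_arrow, Cardinal.lift_id', mk_nat, Cardinal.lift_aleph0, hA, hB]
    exact hkey
  obtain ⟨g, hg⟩ := Cardinal.infinite_pigeonhole f hβ hcard
  -- Step 3: assemble.
  have hBne : (f ⁻¹' {g}).Nonempty := by
    rw [← Set.nonempty_coe_sort, ← Cardinal.mk_ne_zero_iff, hg, hB]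
    exact fun h => (aleph0_pos.trans hkap).ne' h
  obtain ⟨b₀, hb₀⟩ := hBne
  have hgb₀ : f b₀ = g := hb₀
  have hg_inj : Function.Injective g := hgb₀ ▸ hf_inj b₀
  refine ⟨Set.range g, f ⁻¹' {g}, ℵ₀, hlam, ?_, ?_, ?_⟩
  · have := mk_range_eq_of_injective hg_inj
    rw [Cardinal.lift_id'] at this
    rw [this]
    simp
  · rw [hg, hB]
  · intro b hb
    have hfb : f b = g := hb
    apply Set.infinite_of_injective_forall_mem (f := fun n : ℕ => g n) hg_inj
    intro n
    exact ⟨Set.mem_range_self n, by rw [← hfb]; exact hf_mem b n⟩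
end

section
/- Assume GCH. If κ is an infinite cardinal with cf(κ) > λ and cf(κ) is not the successor of a cardinal of countable cofinality, then every (λ,κ)-graph contains an (ℵ₀,κ)-subgraph. -/
open Cardinal

-- μ^ℵ₀ ≤ succ (max μ ℵ₀) under GCH
theorem aux_pow_le {μ : Cardinal.{u}}
    (hGCH : ∀ c : Cardinal.{u}, ℵ₀ ≤ c → (2 : Cardinal.{u}) ^ c = Order.succ c) :
    μ ^ (ℵ₀ : Cardinal.{u}) ≤ Order.succ (max μ ℵ₀) := by
  have h1 : μ ^ (ℵ₀ : Cardinal.{u}) ≤ (2 ^ μ) ^ (ℵ₀ : Cardinal.{u}) :=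
    power_le_power_right (cantor μ).le
  have h2 : ((2:Cardinal.{u}) ^ μ) ^ (ℵ₀ : Cardinal.{u}) = 2 ^ (μ * ℵ₀) := by
    rw [← power_mul]
  have h3 : μ * ℵ₀ ≤ max μ ℵ₀ := by
    calc μ * ℵ₀ ≤ max μ ℵ₀ * max μ ℵ₀ :=
          mul_le_mul' (le_max_left _ _) (le_max_right _ _)
      _ = max μ ℵ₀ := mul_eq_self (le_max_right _ _)
  calc μ ^ (ℵ₀ : Cardinal.{u}) ≤ 2 ^ (μ * ℵ₀) := h2 ▸ h1
    _ ≤ 2 ^ (max μ ℵ₀) := power_le_power_left two_ne_zero h3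
    _ = Order.succ (max μ ℵ₀) := hGCH _ (le_max_right _ _)

-- GCH + cf lam > ℵ₀ ⇒ lam ^ ℵ₀ ≤ lam
theorem aux_pow_aleph0 {lam : Cardinal.{u}}
    (hGCH : ∀ c : Cardinal.{u}, ℵ₀ ≤ c → (2 : Cardinal.{u}) ^ c = Order.succ c)
    (hlam : ℵ₀ ≤ lam) (hcof : ℵ₀ < lam.ord.cof) :
    lam ^ (ℵ₀ : Cardinal.{u}) ≤ lam := by
  have hlam' : ℵ₀ < lam := lt_of_lt_of_le hcof (Ordinal.cof_ord_le lam)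
  induction lam using Cardinal.inductionOn with
  | _ α =>
  obtain ⟨r, wo, hr⟩ := Cardinal.ord_eq α
  haveI := wo
  -- every f : ℕ → α is bounded
  have hbd : ∀ f : ℕ → α, ∃ i : α, ∀ n, r (f n) i := by
    intro f
    have : #(Set.range f) < Ordinal.cof (Ordinal.type r) :=
      lt_of_le_of_lt (@mk_le_aleph0 _ (Set.countable_range f).to_subtype) (by rw [← hr]; exact hcof)
    have hS := Ordinal.iSup_add_one_lt_of_lt_cof this (fun x : Set.range f => Ordinal.typein_lt_type r x.1)
    refine ⟨Ordinal.enum r ⟨_, hS⟩, fun n => ?_⟩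
    rw [← Ordinal.typein_lt_typein r, Ordinal.typein_enum]
    exact (Order.lt_add_one_iff.2 le_rfl).trans_le (Ordinal.le_iSup (fun x : Set.range f => Ordinal.typein r x.1 + 1) ⟨f n, n, rfl⟩)
  have key : #(ℕ → α) ≤ #α := by
    choose idx hidx using hbd
    have hinj : Function.Injective
        (fun f : ℕ → α => (⟨idx f, fun n => ⟨f n, hidx f n⟩⟩ :
          Σ i : α, (ℕ → {j : α // r j i}))) := by
      intro f g h
      funext n
      have := congrArg (fun x : Σ i : α, (ℕ → {j : α // r j i}) => ((x.2 n : {j : α // r j x.1}) : α)) h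
      simpa using this
    calc #(ℕ → α) ≤ #(Σ i : α, (ℕ → {j : α // r j i})) := mk_le_of_injective hinj
      _ = Cardinal.sum (fun i : α => #(ℕ → {j : α // r j i})) := mk_sigma _
      _ ≤ Cardinal.sum (fun _ : α => #α) := by
          refine Cardinal.sum_le_sum _ _ (fun i => ?_)
          have h1 : #(ℕ → {j : α // r j i}) = #{j : α // r j i} ^ (ℵ₀ : Cardinal.{u}) := by
            simp [Cardinal.mk_arrow]
          have hμ : #{j : α // r j i} < #α := by
            rw [← Ordinal.card_typein i]
            exact Cardinal.card_typein_lt (r := r) i hr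
          have hmax : max #{j : α // r j i} ℵ₀ < #α := by
            rcases max_cases #{j : α // r j i} ℵ₀ with ⟨h,_⟩|⟨h,_⟩ <;> rw [h]
            · exact hμ
            · exact hlam'
          rw [h1]
          exact (aux_pow_le hGCH).trans ((Order.succ_le_of_lt hmax))
      _ = #α * #α := by rw [Cardinal.sum_const', mul_comm]
      _ = #α := mul_eq_self hlam
  have harrow : #(ℕ → α) = #α ^ (ℵ₀ : Cardinal.{u}) := by
    simp [Cardinal.mk_arrow]
  rwa [harrow] at key

theorem stmt_3 {α β : Type u} (E : α → β → Prop)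
    (hGCH : ∀ c : Cardinal.{u}, ℵ₀ ≤ c → (2 : Cardinal.{u}) ^ c = Order.succ c)
    (lam kap : Cardinal.{u})
    (hlam : ℵ₀ ≤ lam) (hkapinf : ℵ₀ ≤ kap) (hlt : lam < kap.ord.cof)
    (hshape : ¬ ∃ μ : Cardinal.{u}, μ.ord.cof = ℵ₀ ∧ kap.ord.cof = Order.succ μ)
    (hA : #α = lam) (hB : #β = kap)
    (hE : ∀ b : β, {a : α | E a b}.Infinite) :
    ∃ (A' : Set α) (B' : Set β),
      A'.Countable ∧ #B' = kap ∧
      ∀ b ∈ B', {a : α | a ∈ A' ∧ E a b}.Infinite := by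
  -- step 1: lam ^ ℵ₀ < kap.ord.cof
  have hpow : lam ^ (ℵ₀ : Cardinal.{u}) < kap.ord.cof := by
    have hsucc : Order.succ lam ≤ kap.ord.cof := Order.succ_le_of_lt hlt
    rcases lt_or_eq_of_le hsucc with h | h
    · -- succ lam < cof
      calc lam ^ (ℵ₀ : Cardinal.{u}) ≤ lam ^ lam := power_le_power_left (aleph0_pos.trans_le hlam).ne' hlam
        _ = 2 ^ lam := power_self_eq hlam
        _ = Order.succ lam := hGCH lam hlam
        _ < kap.ord.cof := h
    · -- cof = succ lam; then cf lam ≠ ℵ₀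
      have hne : lam.ord.cof ≠ ℵ₀ := fun hc => hshape ⟨lam, hc, h.symm⟩
      have hcof : ℵ₀ < lam.ord.cof := by
        rcases lt_or_eq_of_le (Ordinal.aleph0_le_cof.2 (Cardinal.isSuccLimit_ord hlam)) with h'|h'
        · exact h'
        · exact absurd h'.symm hne
      calc lam ^ (ℵ₀ : Cardinal.{u}) ≤ lam := aux_pow_aleph0 hGCH hlam hcof
        _ < kap.ord.cof := hlt
  -- step 2: pick countable witness functions
  have hg : ∀ b : β, ∃ g : ℕ → α, Function.Injective g ∧ ∀ n, E (g n) b := by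
    intro b
    obtain e := (hE b).natEmbedding
    exact ⟨fun n => (e n : α), fun m n h => e.injective (Subtype.ext h),
      fun n => (e n).2⟩
  choose g hg1 hg2 using hg
  have hcard : #(ℕ → α) < (#β).ord.cof := by
    rw [hB]
    have : #(ℕ → α) = lam ^ (ℵ₀ : Cardinal.{u}) := by
      rw [← hA]; simp [Cardinal.mk_arrow]
    rw [this]; exact hpow
  obtain ⟨g₀, hg₀⟩ := Cardinal.infinite_pigeonhole g (by rw [hB]; exact hkapinf) hcard
  refine ⟨Set.range g₀, g ⁻¹' {g₀}, Set.countable_range g₀, by rw [hg₀, hB], ?_⟩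
  intro b hb
  have hbg : g b = g₀ := hb
  have : Set.range (g b) ⊆ {a : α | a ∈ Set.range g₀ ∧ E a b} := by
    rintro a ⟨n, rfl⟩
    exact ⟨⟨n, by rw [← hbg]⟩, hg2 b n⟩
  exact Set.Infinite.mono this (Set.infinite_range_of_injective (hg1 b))
end

section
/- Assume GCH. Every (λ,κ)-graph with cf(κ) = ω contains an (ℵ₀,κ)-subgraph. -/
open Cardinal

theorem stmt_4 {α β : Type u} (E : α → β → Prop)
    (hGCH : ∀ c : Cardinal.{u}, ℵ₀ ≤ c → (2 : Cardinal.{u}) ^ c = Order.succ c)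
    (lam kap : Cardinal.{u})
    (hlam : ℵ₀ ≤ lam) (hlt : lam < kap)
    (hcof : kap.ord.cof = ℵ₀)
    (hA : #α = lam) (hB : #β = kap)
    (hE : ∀ b : β, {a : α | E a b}.Infinite) :
    ∃ (A' : Set α) (B' : Set β),
      A'.Countable ∧ #B' = kap ∧
      ∀ b ∈ B', {a : α | a ∈ A' ∧ E a b}.Infinite := by
  have hak : ℵ₀ < kap := lt_of_le_of_lt hlam hlt
  -- kap is a limit cardinal
  have hlim : ∀ c : Cardinal.{u}, c < kap → Order.succ c < kap := by
    intro c hc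
    rcases lt_or_ge c ℵ₀ with h | h
    · exact lt_of_le_of_lt (Order.succ_le_of_lt h) hak
    · refine lt_of_le_of_ne (Order.succ_le_of_lt hc) ?_
      intro heq
      have hreg := (Cardinal.isRegular_succ h).cof_eq
      rw [heq, hcof] at hreg
      exact hak.ne hreg
  -- lam ^ ℵ₀ < kap
  have hmu : lam ^ ℵ₀ < kap := by
    have h1 : lam ^ ℵ₀ ≤ Order.succ lam := by
      calc lam ^ ℵ₀ ≤ (2 ^ lam) ^ ℵ₀ :=
            Cardinal.power_le_power_right (Cardinal.cantor lam).le
        _ = 2 ^ (lam * ℵ₀) := (Cardinal.power_mul).symm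
        _ = 2 ^ lam := by rw [Cardinal.mul_aleph0_eq hlam]
        _ = Order.succ lam := hGCH lam hlam
    exact lt_of_le_of_lt h1 (hlim lam hlt)
  -- choose countable neighbor families
  let g : ∀ b : β, ℕ ↪ {a : α | E a b} := fun b => Set.Infinite.natEmbedding _ (hE b)
  let F : β → ℕ → α := fun b n => (g b n : α)
  have hFinj : ∀ b, Function.Injective (F b) := fun b =>
    Subtype.val_injective.comp (g b).injective
  have hFE : ∀ b n, E (F b n) b := fun b n => (g b n).2
  -- cardinality of the codomain of F
  have hcard : #(ℕ → α) < kap := by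
    have : #(ℕ → α) = lam ^ ℵ₀ := by
      rw [Cardinal.mk_arrow]
      simp [hA]
    rw [this]; exact hmu
  -- key: fibers of F get arbitrarily large below kap
  have key : ∀ c : Cardinal.{u}, c < kap → ∃ b0 : β, c ≤ #(F ⁻¹' {F b0}) := by
    intro c hc
    by_contra hcon
    push_neg at hcon
    have hfib : ∀ r : ℕ → α, #(F ⁻¹' {r}) ≤ c := by
      intro r
      rcases Set.eq_empty_or_nonempty (F ⁻¹' {r}) with he | ⟨b0, hb0⟩
      · simp [he]
      · have : r = F b0 := (Set.mem_preimage.mp hb0).symm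
        rw [this]
        exact (hcon b0).le
    have h1 : #β ≤ #(ℕ → α) * c := by
      calc #β = #(Σ r : ℕ → α, (F ⁻¹' {r})) := (Cardinal.mk_congr (Equiv.sigmaFiberEquiv F)).symm
        _ = Cardinal.sum (fun r : ℕ → α => #(F ⁻¹' {r})) := Cardinal.mk_sigma _
        _ ≤ Cardinal.sum (fun _ : ℕ → α => c) := Cardinal.sum_le_sum _ _ hfib
        _ = #(ℕ → α) * c := Cardinal.sum_const' _ _
    have h2 : #(ℕ → α) * c < kap := Cardinal.mul_lt_of_lt hak.le hcard hc
    rw [hB] at h1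
    exact absurd (lt_of_le_of_lt h1 h2) (lt_irrefl _)
  -- cofinal sequence in kap.ord of length ℵ₀
  obtain ⟨ι, f, hlsub, hι⟩ := Ordinal.exists_lsub_cof kap.ord
  rw [hcof] at hι
  haveI : Countable ι := Cardinal.mk_le_aleph0_iff.mp hι.le
  -- choose witnesses
  have hci : ∀ i : ι, (f i).card < kap := fun i =>
    Cardinal.lt_ord.mp (hlsub ▸ Ordinal.lt_lsub f i)
  let b0 : ι → β := fun i => (key (f i).card (hci i)).choose
  have hb0 : ∀ i, (f i).card ≤ #(F ⁻¹' {F (b0 i)}) := fun i =>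
    (key (f i).card (hci i)).choose_spec
  refine ⟨⋃ i, Set.range (F (b0 i)), ⋃ i, F ⁻¹' {F (b0 i)}, ?_, ?_, ?_⟩
  · exact Set.countable_iUnion fun i => Set.countable_range _
  · refine le_antisymm (hB ▸ Cardinal.mk_set_le _) ?_
    have hub : ∀ c : Cardinal.{u}, c < kap → c ≤ #(⋃ i, F ⁻¹' {F (b0 i)}) := by
      intro c hc
      have : c.ord < Ordinal.lsub f := hlsub.symm ▸ Cardinal.ord_lt_ord.mpr hc
      obtain ⟨i, hi⟩ := Ordinal.lt_lsub_iff.mp this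
      calc c = c.ord.card := (Cardinal.card_ord c).symm
        _ ≤ (f i).card := Ordinal.card_le_card hi
        _ ≤ #(F ⁻¹' {F (b0 i)}) := hb0 i
        _ ≤ #(⋃ i, F ⁻¹' {F (b0 i)}) :=
            Cardinal.mk_le_mk_of_subset (Set.subset_iUnion (fun i => F ⁻¹' {F (b0 i)}) i)
    by_contra hcon
    push_neg at hcon
    have h1 := hub (Order.succ #(⋃ i, F ⁻¹' {F (b0 i)})) (hlim _ hcon)
    exact absurd (lt_of_lt_of_le (Order.lt_succ _) h1) (lt_irrefl _)
  · intro b hb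
    obtain ⟨s, ⟨i, rfl⟩, hbs⟩ := hb
    have hFb : F b = F (b0 i) := Set.mem_preimage.mp hbs
    have hsub : Set.range (F b) ⊆ {a : α | a ∈ (⋃ i, Set.range (F (b0 i))) ∧ E a b} := by
      rintro a ⟨n, rfl⟩
      refine ⟨Set.mem_iUnion.mpr ⟨i, ⟨n, ?_⟩⟩, hFE b n⟩
      rw [← hFb]
    exact (Set.infinite_range_of_injective (hFinj b)).mono hsub
end

section
/- Let λ be a singular cardinal of countable cofinality and κ > λ a regular cardinal. Suppose (f_α)_{α<κ} is a κ-scale: there are a strictly increasing sequence (λ_n)_{n∈ℕ} of uncountable regular cardinals with supremum λ and f_α(n) < λ_n for all α, n, and an ideal I on ℕ containing all finite sets, such that (1) α < β implies f_α <_I f_β, and (2) for every g ∈ ∏_n λ_n there is α < κ with g <_I f_α. Then for every countable subtree S of the tree λ^{<ω} of finite sequences into λ, fewer than κ many of the functions f_α are branches of S (i.e., have all their finite initial segments in S). -/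
open Cardinal

/-- The initial segment of length `n` of an ω-sequence. -/
def seg {α : Type*} (f : ℕ → α) (n : ℕ) : List α := (List.range n).map f

/-- An ideal on ℕ: a proper subset of the powerset containing ∅,
closed under subsets and finite unions. -/
def IsIdealOnNat (I : Set (Set ℕ)) : Prop :=
  (∅ : Set ℕ) ∈ I ∧ (Set.univ : Set ℕ) ∉ I ∧
  (∀ s t : Set ℕ, s ⊆ t → t ∈ I → s ∈ I) ∧
  (∀ s t : Set ℕ, s ∈ I → t ∈ I → s ∪ t ∈ I)

/-- `f <_I g` : the set where `f` is not below `g` lies in the ideal `I`. -/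
def LtI (I : Set (Set ℕ)) (f g : ℕ → Ordinal.{0}) : Prop := {n : ℕ | g n ≤ f n} ∈ I

theorem stmt_9 (lam kap : Cardinal.{0})
    (hlam_unc : ℵ₀ < lam) (hlam_cof : lam.ord.cof = ℵ₀)
    (hkap_reg : kap.IsRegular) (hlk : lam < kap)
    -- the scale is indexed by a well-order of order type κ
    (ι : Type) [LinearOrder ι] [WellFoundedLT ι] (hι : #ι = kap)
    (hseg : ∀ i : ι, #{j : ι | j < i} < kap)
    (lamn : ℕ → Cardinal.{0}) (hmono : StrictMono lamn)
    (hreg : ∀ n, (lamn n).IsRegular ∧ ℵ₀ < lamn n)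
    (hsup : (⨆ n, lamn n) = lam)
    (I : Set (Set ℕ)) (hI : IsIdealOnNat I)
    (hfin : ∀ s : Set ℕ, s.Finite → s ∈ I)
    (f : ι → ℕ → Ordinal.{0}) (hbd : ∀ i n, f i n < (lamn n).ord)
    (hinc : ∀ i j : ι, i < j → LtI I (f i) (f j))
    (hcofin : ∀ g : ℕ → Ordinal.{0}, (∀ n, g n < (lamn n).ord) → ∃ i, LtI I g (f i)) :
    ∀ S : Set (List Ordinal.{0}), S.Countable →
      (∀ l ∈ S, ∀ l' : List Ordinal.{0}, l' <+: l → l' ∈ S) →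
      (∀ l ∈ S, ∀ x ∈ l, x < lam.ord) →
      #{i : ι // ∀ n, seg (f i) n ∈ S} < kap := by
  intro S hSc _hSd _hSb
  -- if S is empty there are no branches at all
  rcases Set.eq_empty_or_nonempty S with hSe | hSne
  · have : IsEmpty {i : ι // ∀ n, seg (f i) n ∈ S} := by
      constructor
      rintro ⟨i, hi⟩
      have := hi 0
      rw [hSe] at this
      exact this
    simpa [Cardinal.mk_eq_zero_iff.2 this] using hkap_reg.pos
  obtain ⟨e, he⟩ := Set.Countable.exists_eq_range hSc hSne
  -- the capped value of the k-th node at coordinate n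
  set c : ℕ → ℕ → Ordinal.{0} := fun n k =>
    if (e k).getD n 0 < (lamn n).ord then (e k).getD n 0 else 0 with hc
  have hcb : ∀ n k, c n k < (lamn n).ord := by
    intro n k
    simp only [hc]
    split
    · assumption
    · exact Cardinal.lt_ord.2 (by simpa using (hreg n).1.pos)
  -- the dominating function
  have hsupS : ∀ n, (⨆ k, c n k) < (lamn n).ord := by
    intro n
    refine Ordinal.iSup_lt_ord ?_ (hcb n)
    rw [(hreg n).1.cof_eq, Cardinal.mk_nat]
    exact (hreg n).2
  set g : ℕ → Ordinal.{0} := fun n => (⨆ k, c n k) + 1 with hg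
  have hgb : ∀ n, g n < (lamn n).ord := by
    intro n
    have hlim := Cardinal.isSuccLimit_ord ((hreg n).1.aleph0_le)
    exact hlim.succ_lt (hsupS n)
  obtain ⟨a, ha⟩ := hcofin g hgb
  -- every branch index is ≤ a
  have hkey : ∀ i : ι, (∀ n, seg (f i) n ∈ S) → i ≤ a := by
    intro i hi
    by_contra hlt
    push_neg at hlt
    have hC := hinc a i hlt
    have hU := hI.2.2.2 _ _ ha hC
    have hne : ({n | f a n ≤ g n} ∪ {n | f i n ≤ f a n}) ≠ Set.univ := by
      intro h
      exact hI.2.1 (h ▸ hU)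
    obtain ⟨n, hn⟩ := Set.ne_univ_iff_exists_notMem _ |>.1 hne
    simp only [Set.mem_union, Set.mem_setOf_eq, not_or, not_le] at hn
    -- f i n belongs to the sup
    obtain ⟨k, hk⟩ : ∃ k, e k = seg (f i) (n + 1) := by
      have := hi (n + 1)
      rw [he] at this
      exact this
    have hmem : c n k = f i n := by
      have hget : (seg (f i) (n + 1)).getD n 0 = f i n := by
        simp [seg, List.getD, List.getElem?_map]
      simp only [hc, hk, hget, if_pos (hbd i n)]
    have hle : f i n ≤ ⨆ k, c n k := by
      rw [← hmem]
      exact le_ciSup (Ordinal.bddAbove_range.{0,0} (c n)) k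
    have : f i n < g n := lt_of_le_of_lt hle (lt_add_one _)
    exact absurd (this.trans hn.1) (lt_asymm hn.2)
  -- conclude cardinality bound
  have hsub : #{i : ι // ∀ n, seg (f i) n ∈ S} ≤ #(Set.Iic a) := by
    apply Cardinal.mk_le_mk_of_subset
    intro i hi
    exact hkey i hi
  have hIic : (Set.Iic a) = insert a (Set.Iio a) := by
    ext j; simp [le_iff_lt_or_eq, or_comm]
  calc #{i : ι // ∀ n, seg (f i) n ∈ S} ≤ #(Set.Iic a) := hsub
    _ = #(insert a (Set.Iio a) : Set ι) := by rw [hIic]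
    _ ≤ #(Set.Iio a) + 1 := Cardinal.mk_insert_le
    _ < kap := Cardinal.add_lt_of_lt hkap_reg.aleph0_le (hseg a)
        (lt_of_lt_of_le Cardinal.one_lt_aleph0 hkap_reg.aleph0_le)
end

section
/- Let λ be a singular cardinal of countable cofinality, κ > λ regular, and let (f_α)_{α<κ} be a κ-scale on the tree T_λ (with respect to regular cardinals λ_n ↗ λ and ideal I on ℕ containing all finite sets). Let T be the downward closure in λ^{≤ω} of {f_α : α < κ}, and let G be the bipartite graph with sides A = λ^{<ω} ∩ T and B = {f_α : α < κ}, where f_α is joined to each of its infinitely many proper initial segments. Then G is a (λ,κ)-graph that contains no (ℵ₀,κ)-subgraph: there do not exist a countable A' ⊆ A and B' ⊆ B with |B'| = κ such that every vertex of B' has infinitely many neighbours in A'. -/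
open Cardinal

lemma seg_length {α : Type*} (f : ℕ → α) (n : ℕ) : (seg f n).length = n := by
  simp [seg]

lemma seg_getD (f : ℕ → Ordinal.{0}) {k n : ℕ} (h : k < n) :
    (seg f n).getD k 0 = f k := by
  rw [List.getD_eq_getElem _ _ (by simpa [seg_length] using h)]
  simp [seg]

theorem stmt_10 (lam kap : Cardinal.{0})
    (hlam_unc : ℵ₀ < lam) (hlam_cof : lam.ord.cof = ℵ₀)
    (hkap_reg : kap.IsRegular) (hlk : lam < kap)
    (ι : Type) [LinearOrder ι] [WellFoundedLT ι] (hι : #ι = kap)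
    (hseg : ∀ i : ι, #{j : ι | j < i} < kap)
    (lamn : ℕ → Cardinal.{0}) (hmono : StrictMono lamn)
    (hreg : ∀ n, (lamn n).IsRegular ∧ ℵ₀ < lamn n)
    (hsup : (⨆ n, lamn n) = lam)
    (I : Set (Set ℕ)) (hI : IsIdealOnNat I)
    (hfin : ∀ s : Set ℕ, s.Finite → s ∈ I)
    (f : ι → ℕ → Ordinal.{0}) (hbd : ∀ i n, f i n < (lamn n).ord)
    (hinc : ∀ i j : ι, i < j → LtI I (f i) (f j))
    (hcofin : ∀ g : ℕ → Ordinal.{0}, (∀ n, g n < (lamn n).ord) → ∃ i, LtI I g (f i)) :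
    -- `A` is the downward closure of the tops `f i`, i.e. all their finite initial segments
    (∀ i : ι, {l : List Ordinal.{0} |
        l ∈ {l | ∃ (j : ι) (n : ℕ), l = seg (f j) n} ∧ ∃ n, l = seg (f i) n}.Infinite) ∧
    #{l : List Ordinal.{0} | ∃ (j : ι) (n : ℕ), l = seg (f j) n} = Cardinal.lift.{1} lam ∧
    Function.Injective f ∧
    ¬ ∃ (A' : Set (List Ordinal.{0})) (B' : Set ι),
        A' ⊆ {l | ∃ (j : ι) (n : ℕ), l = seg (f j) n} ∧ A'.Countable ∧ #B' = kap ∧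
        ∀ i ∈ B', {l : List Ordinal.{0} | l ∈ A' ∧ ∃ n, l = seg (f i) n}.Infinite := by
  set A : Set (List Ordinal.{0}) := {l | ∃ (j : ι) (n : ℕ), l = seg (f j) n} with hAdef
  have hmem : ∀ (j : ι) (n : ℕ), seg (f j) n ∈ A := fun j n => ⟨j, n, rfl⟩
  have hlim : ∀ k, Order.IsSuccLimit ((lamn k).ord) :=
    fun k => Cardinal.isSuccLimit_ord (le_of_lt (hreg k).2)
  have hentry : ∀ l ∈ A, ∀ k, l.getD k 0 < (lamn k).ord := by
    rintro l ⟨j, n, rfl⟩ k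
    by_cases hk : k < n
    · rw [seg_getD _ hk]; exact hbd j k
    · rw [List.getD_eq_default _ _ (by simpa [seg_length] using not_lt.mp hk)]
      exact (hlim k).pos
  have hseg_inj : ∀ (i : ι), Function.Injective (fun n => seg (f i) n) := by
    intro i a b h
    have := congrArg List.length h
    simpa [seg_length] using this
  refine ⟨?_, ?_, ?_, ?_⟩
  · -- each top has infinitely many neighbours
    intro i
    exact Set.infinite_of_injective_forall_mem (hseg_inj i)
      (fun n => ⟨hmem i n, n, rfl⟩)
  · -- cardinality of A is lam
    have hAle : #A ≤ Cardinal.lift.{1} lam := by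
      have hlt : ∀ l ∈ A, ∀ x ∈ l, x ∈ Set.Iio lam.ord := by
        rintro l ⟨j, n, rfl⟩ x hx
        simp only [seg, List.mem_map, List.mem_range] at hx
        obtain ⟨k, _, rfl⟩ := hx
        refine lt_of_lt_of_le (hbd j k) (Cardinal.ord_le_ord.mpr ?_)
        rw [← hsup]
        exact le_ciSup (Cardinal.bddAbove_range lamn) k
      haveI hinf : Infinite ↥(Set.Iio lam.ord) := by
        rw [Cardinal.infinite_iff, Ordinal.mk_Iio_ordinal, Cardinal.card_ord]
        exact Cardinal.aleph0_le_lift.mpr hlam_unc.le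
      have h1 : #A ≤ #(List ↥(Set.Iio lam.ord)) := by
        refine Cardinal.mk_le_of_injective
          (f := fun l : ↥A =>
            l.1.pmap (fun x h => (⟨x, h⟩ : ↥(Set.Iio lam.ord)))
              (fun x hx => hlt l.1 l.2 x hx)) ?_
        intro a b h
        apply Subtype.ext
        have ha := congrArg (List.map Subtype.val) h
        simpa [List.map_pmap, List.pmap_eq_map] using ha
      rwa [Cardinal.mk_list_eq_mk, Ordinal.mk_Iio_ordinal, Cardinal.card_ord] at h1
    have hAge : ¬ (#A < Cardinal.lift.{1} lam) := by
      intro hAlt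
      obtain ⟨m, hm⟩ : ∃ m, #A < Cardinal.lift.{1} (lamn m) := by
        by_contra hc
        push_neg at hc
        have hle : Cardinal.lift.{1} lam ≤ #A := by
          rw [← hsup, Cardinal.lift_iSup (Cardinal.bddAbove_range lamn)]
          exact ciSup_le hc
        exact absurd hAlt (not_lt.mpr hle)
      obtain ⟨c, hclt, hc⟩ := Cardinal.lt_lift_iff.mp hm
      have hγ : #(ULift.{1} c.out) = #↥A := by rw [mk_uLift, mk_out]; exact hc
      obtain ⟨e⟩ := Cardinal.eq.mp hγ
      set σ : c.out → List Ordinal.{0} := fun x => (e ⟨x⟩ : ↥A) with hσdef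
      have hσA : ∀ x, σ x ∈ A := fun x => (e ⟨x⟩).2
      have hcov : ∀ l ∈ A, ∃ x, σ x = l := by
        intro l hl
        refine ⟨(e.symm ⟨l, hl⟩).down, ?_⟩
        simp only [hσdef]
        rw [show (⟨(e.symm ⟨l, hl⟩).down⟩ : ULift.{1} c.out) = e.symm ⟨l, hl⟩ from rfl,
          Equiv.apply_symm_apply]
      have hγlt : #c.out < lamn m := by rw [mk_out]; exact hclt
      set g : ℕ → Ordinal.{0} :=
        fun n => if m ≤ n then ⨆ x : c.out, ((σ x).getD n 0 + 1) else 0 with hgdef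
      have hg : ∀ n, g n < (lamn n).ord := by
        intro n
        simp only [hgdef]
        split
        · rename_i hmn
          refine Ordinal.iSup_lt_ord ?_ fun x => ?_
          · rw [(hreg n).1.cof_eq]
            exact lt_of_lt_of_le hγlt (hmono.monotone hmn)
          · rw [Ordinal.add_one_eq_succ]
            exact (hlim n).succ_lt (hentry _ (hσA x) n)
        · exact (hlim n).pos
      obtain ⟨j, hj⟩ := hcofin g hg
      have hsub : Set.Ici m ⊆ {n | f j n ≤ g n} := by
        intro n hn
        obtain ⟨x, hx⟩ := hcov (seg (f j) (n+1)) (hmem j (n+1))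
        have h1 : f j n + 1 ≤ g n := by
          have h2 : f j n = (σ x).getD n 0 := by
            rw [hx, seg_getD _ (Nat.lt_succ_self n)]
          simp only [hgdef]
          rw [if_pos (Set.mem_Ici.mp hn), h2]
          exact le_ciSup (Ordinal.bddAbove_range _) x
        exact le_trans (le_self_add) h1
      have h1 : Set.Ici m ∈ I := hI.2.2.1 _ _ hsub hj
      have h2 : Set.Iio m ∈ I := hfin _ (Set.finite_Iio m)
      have huniv : (Set.univ : Set ℕ) ∈ I := by
        have := hI.2.2.2 _ _ h2 h1
        rwa [Set.Iio_union_Ici] at this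
      exact hI.2.1 huniv
    exact le_antisymm hAle (not_lt.mp hAge)
  · -- injectivity of f
    intro i j hij
    rcases lt_trichotomy i j with h | h | h
    · exfalso
      have h1 := hinc i j h
      have h2 : {n : ℕ | f j n ≤ f i n} = Set.univ :=
        Set.eq_univ_of_forall (fun n => by simp only [Set.mem_setOf_eq, hij, le_refl])
      rw [LtI, h2] at h1
      exact hI.2.1 h1
    · exact h
    · exfalso
      have h1 := hinc j i h
      have h2 : {n : ℕ | f i n ≤ f j n} = Set.univ :=
        Set.eq_univ_of_forall (fun n => by simp only [Set.mem_setOf_eq, hij, le_refl])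
      rw [LtI, h2] at h1
      exact hI.2.1 h1
  · -- no countable A' works
    rintro ⟨A', B', hA'A, hA'c, hB', hnb⟩
    have hB'ne : B'.Nonempty := by
      rw [← Set.nonempty_coe_sort]
      rw [← Cardinal.mk_ne_zero_iff, hB']
      exact hkap_reg.pos.ne'
    have hA'ne : A'.Nonempty := by
      obtain ⟨i0, hi0⟩ := hB'ne
      obtain ⟨l, hl⟩ := (hnb i0 hi0).nonempty
      exact ⟨l, hl.1⟩
    obtain ⟨σ, hσ⟩ := hA'c.exists_eq_range hA'ne
    have hσA : ∀ k, σ k ∈ A := fun k => hA'A (hσ ▸ Set.mem_range_self k)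
    set g : ℕ → Ordinal.{0} := fun n => ⨆ k : ℕ, ((σ k).getD n 0 + 1) with hgdef
    have hg : ∀ n, g n < (lamn n).ord := by
      intro n
      refine Ordinal.iSup_lt_ord ?_ fun k => ?_
      · rw [(hreg n).1.cof_eq, Cardinal.mk_nat]
        exact (hreg n).2
      · rw [Ordinal.add_one_eq_succ]
        exact (hlim n).succ_lt (hentry _ (hσA k) n)
    obtain ⟨j, hj⟩ := hcofin g hg
    have hsmall : #{i : ι | i ≤ j} < kap := by
      have he : {i : ι | i ≤ j} = insert j {i : ι | i < j} := by
        ext x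
        simp [le_iff_lt_or_eq, or_comm]
      rw [he]
      refine lt_of_le_of_lt Cardinal.mk_insert_le ?_
      exact Cardinal.add_lt_of_lt hkap_reg.aleph0_le (hseg j)
        (lt_of_lt_of_le Cardinal.one_lt_aleph0 hkap_reg.aleph0_le)
    obtain ⟨i, hiB, hij⟩ : ∃ i ∈ B', j < i := by
      by_contra hc
      push_neg at hc
      have hsubB : B' ⊆ {i : ι | i ≤ j} := hc
      have := Cardinal.mk_le_mk_of_subset hsubB
      rw [hB'] at this
      exact absurd (lt_of_le_of_lt this hsmall) (lt_irrefl _)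
    have hfi : ∀ k, f i k < g k := by
      intro k
      obtain ⟨n, hkn, hn⟩ : ∃ n, k < n ∧ seg (f i) n ∈ A' := by
        by_contra hc
        push_neg at hc
        refine hnb i hiB ?_
        refine Set.Finite.subset ((Set.finite_Iic k).image (fun n => seg (f i) n)) ?_
        rintro l ⟨hlA', n, rfl⟩
        refine ⟨n, ?_, rfl⟩
        by_contra hk2
        exact hc n (not_le.mp (fun h => hk2 h)) hlA'
      obtain ⟨x, hx⟩ : ∃ x, σ x = seg (f i) n := by
        have := hσ ▸ hn
        exact this
      have h1 : f i k + 1 ≤ g k := by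
        simp only [hgdef]
        have h2 : f i k = (σ x).getD k 0 := by rw [hx, seg_getD _ hkn]
        rw [h2]
        exact le_ciSup (Ordinal.bddAbove_range _) x
      calc f i k < f i k + 1 := by
            rw [Ordinal.add_one_eq_succ]; exact Order.lt_succ _
        _ ≤ g k := h1
    have hS1 : {n : ℕ | f i n ≤ f j n} ∈ I := hinc j i hij
    have huniv : (Set.univ : Set ℕ) ⊆ {n | f i n ≤ f j n} ∪ {n | f j n ≤ g n} := by
      intro n _
      rcases le_or_gt (f j n) (g n) with h | h
      · exact Or.inr h
      · exact Or.inl (le_of_lt (lt_trans (hfi n) h))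
    exact hI.2.1 (hI.2.2.1 _ _ huniv (hI.2.2.2 _ _ hS1 hj))
end

section
/- Let T be an order tree (a partial order with a least element in which every down-set ⌈t⌉ = {t' : t' ≤ t} is well-ordered). If T is an Aronszajn tree with an antichain partition {U_n : n ∈ ℕ}, then for every limit point t ∈ T one can choose an increasing ω-sequence t_0 < t_1 < ⋯ cofinal in {t' : t' < t} such that the following holds: for every t ∈ T there is a finite set S_t ⊆ {t' : t' < t} such that for every t' > t, all chosen sequence-elements of t' that lie below t belong to S_t. -/
open Cardinal

/-- A point of an order tree is a limit if it is above some point but has no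
immediate predecessor. -/
def IsLimitPt {T : Type u} [PartialOrder T] (t : T) : Prop :=
  (∃ s, s < t) ∧ ¬ ∃ s : T, s ⋖ t

section Aux

variable {T : Type u} [PartialOrder T]

open Classical in
/-- Pick the element of `U i ∩ S` for the least `i` such that this set is
nonempty (if it exists; else the default). -/
noncomputable def pickElt (U : ℕ → Set T) (S : Set T) (d : T) : T :=
  if h : ∃ i, (U i ∩ S).Nonempty then (Nat.find_spec h).some else d

open Classical in
theorem pickElt_spec {U : ℕ → Set T} {S : Set T} (d : T)
    (h : ∃ i, (U i ∩ S).Nonempty) :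
    ∃ i, pickElt U S d ∈ U i ∩ S ∧ ∀ j < i, ¬(U j ∩ S).Nonempty := by
  refine ⟨Nat.find h, ?_, fun j hj => Nat.find_min h hj⟩
  rw [pickElt, dif_pos h]
  exact (Nat.find_spec h).some_mem

theorem pickElt_eq {U : ℕ → Set T} {S : Set T} (d : T) {i : ℕ} {x : T}
    (hx : x ∈ U i ∩ S) (hmin : ∀ j < i, ¬(U j ∩ S).Nonempty)
    (huniq : ∀ y ∈ U i ∩ S, y = x) :
    pickElt U S d = x := by
  have h : ∃ i, (U i ∩ S).Nonempty := ⟨i, x, hx⟩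
  obtain ⟨i', hmem, hmin'⟩ := pickElt_spec d h
  have hii : i' = i := by
    rcases lt_trichotomy i' i with hlt | he | hlt
    · exact absurd ⟨_, hmem⟩ (hmin _ hlt)
    · exact he
    · exact absurd ⟨x, hx⟩ (hmin' _ hlt)
  exact huniq _ (hii ▸ hmem)

/-- The sequence chosen at a limit point `t`. -/
noncomputable def seqA (U : ℕ → Set T) (root t : T) : ℕ → T :=
  fun n => Nat.rec root (fun _ s => pickElt U (Set.Ioo s t) s) n

/-- The "canonical" comparison sequence at an arbitrary point `t`,
using half-open intervals `(s, t]`. -/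
noncomputable def sigA (U : ℕ → Set T) (root t : T) : ℕ → T :=
  fun n => Nat.rec root (fun _ s => pickElt U (Set.Ioc s t) t) n

end Aux

theorem stmt_14 {T : Type u} [PartialOrder T]
    -- order tree: least element, down-sets are chains, and < is well-founded
    -- (so every down-set ⌈t⌉ is well-ordered)
    (root : T) (hroot : ∀ t, root ≤ t)
    (hchain : ∀ t : T, IsChain (· ≤ ·) (Set.Iic t))
    [WellFoundedLT T]
    -- Aronszajn: size ℵ₁, countable branches (maximal chains), countable levels
    (hsize : #T = Cardinal.aleph 1)
    (hbranch : ∀ C : Set T, IsMaxChain (· ≤ ·) C → C.Countable)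
    (hlevel : ∀ o : Ordinal.{u},
      {t : T | IsWellFounded.rank (α := T) (· < ·) t = o}.Countable)
    -- an antichain partition
    (U : ℕ → Set T) (hanti : ∀ n, IsAntichain (· ≤ ·) (U n))
    (hpart : ∀ t : T, ∃! n, t ∈ U n) :
    ∃ seq : T → ℕ → T,
      -- at each limit point, `seq t` is an increasing cofinal ω-sequence below t
      (∀ t : T, IsLimitPt t →
        StrictMono (seq t) ∧ (∀ n, seq t n < t) ∧ ∀ s, s < t → ∃ n, s ≤ seq t n) ∧
      -- property (⋆)
      (∀ t : T, ∃ St : Finset T, (∀ s ∈ St, s < t) ∧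
        ∀ t' : T, t < t' → IsLimitPt t' →
          ∀ n : ℕ, seq t' n < t → seq t' n ∈ St) := by
  classical
  have hcomp : ∀ {a b c : T}, a ≤ c → b ≤ c → a ≤ b ∨ b ≤ a := by
    intro a b c ha hb
    rcases eq_or_ne a b with rfl | hne
    · exact Or.inl le_rfl
    · exact hchain c ha hb hne
  have huniqU : ∀ {i : ℕ} {a b c : T}, a ∈ U i → b ∈ U i → a ≤ c → b ≤ c → a = b := by
    intro i a b c ha hb hac hbc
    by_contra hne
    rcases hcomp hac hbc with h | h
    · exact hanti i ha hb hne h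
    · exact hanti i hb ha (Ne.symm hne) h
  set seq : T → ℕ → T := fun t => seqA U root t with hseqdef
  -- basic step facts at a limit point
  have hzero : ∀ t, seq t 0 = root := fun _ => rfl
  have hsucc : ∀ t n, seq t (n + 1) = pickElt U (Set.Ioo (seq t n) t) (seq t n) :=
    fun _ _ => rfl
  have hbasic : ∀ t : T, IsLimitPt t →
      (∀ n, seq t n < t) ∧ (∀ n, seq t n < seq t (n + 1)) ∧
      (∀ n, ∃ i, seq t (n + 1) ∈ U i ∩ Set.Ioo (seq t n) t ∧
        ∀ j < i, ¬(U j ∩ Set.Ioo (seq t n) t).Nonempty) := by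
    intro t ht
    obtain ⟨⟨s0, hs0⟩, hnc⟩ := ht
    have hroot_lt : root < t := lt_of_le_of_lt (hroot s0) hs0
    have hex : ∀ s : T, s < t → ∃ i, (U i ∩ Set.Ioo s t).Nonempty := by
      intro s hs
      obtain ⟨c, hc1, hc2⟩ := (not_covBy_iff hs).mp (fun hc => hnc ⟨s, hc⟩)
      obtain ⟨m, hm, -⟩ := hpart c
      exact ⟨m, c, hm, hc1, hc2⟩
    have key : ∀ n, seq t n < t := by
      intro n
      induction n with
      | zero => exact hroot_lt
      | succ n ih =>
        obtain ⟨i, hmem, -⟩ := pickElt_spec (seq t n) (hex _ ih)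
        rw [hsucc]
        exact hmem.2.2
    refine ⟨key, ?_, ?_⟩
    · intro n
      obtain ⟨i, hmem, -⟩ := pickElt_spec (seq t n) (hex _ (key n))
      rw [hsucc]
      exact hmem.2.1
    · intro n
      obtain ⟨i, hmem, hmin⟩ := pickElt_spec (seq t n) (hex _ (key n))
      exact ⟨i, by rw [hsucc]; exact hmem, hmin⟩
  have hmono : ∀ t : T, IsLimitPt t → StrictMono (seq t) := by
    intro t ht
    exact strictMono_nat_of_lt_succ (hbasic t ht).2.1
  refine ⟨seq, ?_, ?_⟩
  · -- limit point properties
    intro t ht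
    refine ⟨hmono t ht, (hbasic t ht).1, ?_⟩
    intro s hst
    by_contra hno
    push_neg at hno
    have hbelow : ∀ n, seq t n < s := by
      intro n
      rcases hcomp (le_of_lt ((hbasic t ht).1 n)) (le_of_lt hst) with h | h
      · exact lt_of_le_of_ne h (fun he => absurd (he ▸ le_rfl) (hno n))
      · exact absurd h (hno n)
    obtain ⟨k, hk, -⟩ := hpart s
    choose I hI1 hI2 using (hbasic t ht).2.2
    have hIk : ∀ n, I n ≤ k := by
      intro n
      by_contra hlt
      exact hI2 n k (Nat.lt_of_not_le hlt) ⟨s, hk, hbelow n, hst⟩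
    have hImono : ∀ n, I n < I (n + 1) := by
      intro n
      by_contra hle
      push_neg at hle
      rcases lt_or_eq_of_le hle with hlt | he
      · exact hI2 n _ hlt
          ⟨seq t (n + 2), (hI1 (n + 1)).1,
            lt_trans (hI1 n).2.1 (hI1 (n + 1)).2.1, (hI1 (n + 1)).2.2⟩
      · have heq : seq t (n + 2) = seq t (n + 1) :=
          huniqU (he ▸ (hI1 (n + 1)).1) (hI1 n).1
            (le_of_lt (hI1 (n + 1)).2.2) (le_of_lt (hI1 n).2.2)
        exact absurd heq (ne_of_gt (hI1 (n + 1)).2.1)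
    have hge : ∀ n, n ≤ I n := by
      intro n
      induction n with
      | zero => exact Nat.zero_le _
      | succ n ih => exact Nat.succ_le_of_lt (lt_of_le_of_lt ih (hImono n))
    have := hge (k + 1)
    have := hIk (k + 1)
    omega
  · -- property (⋆)
    intro t
    obtain ⟨k, hk, -⟩ := hpart t
    set sig : ℕ → T := sigA U root t with hsigdef
    have hsig0 : sig 0 = root := rfl
    have hsigS : ∀ n, sig (n + 1) = pickElt U (Set.Ioc (sig n) t) t := fun _ => rfl
    have hsig_spec : ∀ n, sig n < t →
        ∃ i, sig (n + 1) ∈ U i ∩ Set.Ioc (sig n) t ∧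
          ∀ j < i, ¬(U j ∩ Set.Ioc (sig n) t).Nonempty := by
      intro n hn
      obtain ⟨i, hmem, hmin⟩ :=
        pickElt_spec t (⟨k, t, hk, hn, le_rfl⟩ : ∃ i, (U i ∩ Set.Ioc (sig n) t).Nonempty)
      exact ⟨i, by rw [hsigS]; exact hmem, hmin⟩
    -- index lower bound along sig
    have hQ : ∀ n, (∀ m, m ≤ n → sig m < t) →
        ∃ i, n ≤ i ∧ sig (n + 1) ∈ U i ∩ Set.Ioc (sig n) t ∧
          ∀ j < i, ¬(U j ∩ Set.Ioc (sig n) t).Nonempty := by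
      intro n
      induction n with
      | zero =>
        intro h
        obtain ⟨i, h1, h2⟩ := hsig_spec 0 (h 0 le_rfl)
        exact ⟨i, Nat.zero_le _, h1, h2⟩
      | succ n ih =>
        intro h
        obtain ⟨i, hni, hmem, hmin⟩ := ih (fun m hm => h m (le_trans hm (Nat.le_succ n)))
        obtain ⟨i', hmem', hmin'⟩ := hsig_spec (n + 1) (h (n + 1) le_rfl)
        refine ⟨i', ?_, hmem', hmin'⟩
        have hii : i < i' := by
          by_contra hle
          push_neg at hle
          rcases lt_or_eq_of_le hle with hlt | he
          · exact hmin i' hlt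
              ⟨sig (n + 2), hmem'.1, lt_trans hmem.2.1 hmem'.2.1, hmem'.2.2⟩
          · have heq : sig (n + 2) = sig (n + 1) :=
              huniqU (he ▸ hmem'.1) hmem.1 hmem'.2.2 hmem.2.2
            exact absurd heq (ne_of_gt hmem'.2.1)
        omega
    have hbound : ∀ n, (∀ m, m ≤ n → sig m < t) → n ≤ k := by
      intro n h
      obtain ⟨i, hni, hmem, hmin⟩ := hQ n h
      have hik : i ≤ k := by
        by_contra hlt
        exact hmin k (Nat.lt_of_not_le hlt) ⟨t, hk, h n le_rfl, le_rfl⟩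
      omega
    -- transfer: entries of seq t' below t coincide with sig
    have htrans : ∀ t', t < t' → IsLimitPt t' →
        ∀ n, seq t' n < t → ∀ m, m ≤ n → seq t' m = sig m := by
      intro t' htt' hlim n
      induction n with
      | zero =>
        intro _ m hm
        interval_cases m
        rfl
      | succ n ih =>
        intro hlt m hm
        have hn_lt : seq t' n < t := lt_trans ((hbasic t' hlim).2.1 n) hlt
        have ihall := ih hn_lt
        rcases Nat.lt_or_ge m (n + 1) with hm' | hm'
        · exact ihall m (Nat.lt_succ_iff.mp hm')
        · have hmn : m = n + 1 := le_antisymm hm hm'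
          subst hmn
          have hsn : seq t' n = sig n := ihall n le_rfl
          obtain ⟨i, hmem, hmin⟩ := (hbasic t' hlim).2.2 n
          rw [hsigS]
          symm
          refine pickElt_eq t (i := i) (x := seq t' (n + 1)) ?_ ?_ ?_
          · exact ⟨hmem.1, by rw [← hsn]; exact hmem.2.1, le_of_lt hlt⟩
          · intro j hj ⟨y, hy1, hy2⟩
            exact hmin j hj ⟨y, hy1, by rw [hsn]; exact hy2.1, lt_of_le_of_lt hy2.2 htt'⟩
          · intro y hy
            exact huniqU hy.1 hmem.1 hy.2.2 (le_of_lt hlt)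
    refine ⟨(Finset.image sig (Finset.range (k + 1))).filter (· < t), ?_, ?_⟩
    · intro s hs
      exact (Finset.mem_filter.mp hs).2
    · intro t' htt' hlim n hlt
      have heq : ∀ m, m ≤ n → seq t' m = sig m := htrans t' htt' hlim n hlt
      have hsig_lt : ∀ m, m ≤ n → sig m < t := by
        intro m hm
        rw [← heq m hm]
        exact lt_of_le_of_lt ((hmono t' hlim).monotone hm) hlt
      have hnk : n ≤ k := hbound n hsig_lt
      rw [Finset.mem_filter]
      exact ⟨Finset.mem_image.mpr ⟨n, Finset.mem_range.mpr (by omega), (heq n le_rfl).symm⟩, hlt⟩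
end

section
/- Let G be a sparse T-graph for an order tree T of height at most ω₁, and let H = G ♯ ℕ be its ray inflation. Then for every ordinal i < ω₁, the map sending t ∈ T^i (the i-th level of T) to the induced subgraph H[⌊t⌋ × ℕ] is a bijection between T^i and the set of connected components of H − (T^{<i} × ℕ). -/
open Cardinal

/-- One direction of adjacency in the ray inflation `G ♯ ℕ` of a sparse `T`-graph
determined by the ladder system `ladder`: `q` is a "lower" neighbour of `p`.
The three clauses are: horizontal ray edges; successor edges to the predecessor;
limit edges `(t,n)(t_n,n)` along the chosen cofinal sequence. -/
def InflAdj {T : Type u} [PartialOrder T] (ladder : T → ℕ → T) (p q : T × ℕ) : Prop :=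
  (q.1 = p.1 ∧ q.2 = p.2 + 1) ∨
  (q.2 = p.2 ∧ q.1 ⋖ p.1) ∨
  (IsLimitPt p.1 ∧ q = (ladder p.1 p.2, p.2))

/-- The height (rank) of a node of an order tree. -/
noncomputable def rk {T : Type u} [PartialOrder T] [WellFoundedLT T] (t : T) : Ordinal.{u} :=
  IsWellFounded.rank (α := T) (· < ·) t

section Aux
variable {T : Type u} [PartialOrder T] [WellFoundedLT T]

lemma rk_strictMono : StrictMono (rk (T := T)) :=
  fun _ _ h => IsWellFounded.rank_lt_of_rel h

lemma rk_mono {s u : T} (h : s ≤ u) : rk s ≤ rk u := by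
  rcases h.lt_or_eq with h | rfl
  · exact (rk_strictMono h).le
  · exact le_rfl

lemma exists_anc : ∀ (u : T) (i : Ordinal.{u}), i ≤ rk u → ∃ s, s ≤ u ∧ rk s = i := by
  intro u
  induction u using WellFoundedLT.induction with
  | ind u IH =>
    intro i hi
    rcases hi.lt_or_eq with hlt | heq
    · rw [rk, IsWellFounded.rank_eq, Ordinal.lt_iSup_iff] at hlt
      obtain ⟨⟨b, hb⟩, hib⟩ := hlt
      obtain ⟨s, hs1, hs2⟩ := IH b hb i (Order.lt_succ_iff.mp hib)
      exact ⟨s, hs1.trans hb.le, hs2⟩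
    · exact ⟨u, le_rfl, heq.symm⟩

variable (ladder : T → ℕ → T)
    (hladder : ∀ t : T, IsLimitPt t →
      StrictMono (ladder t) ∧ (∀ n, ladder t n < t) ∧ ∀ s, s < t → ∃ n, s ≤ ladder t n)
    (H : SimpleGraph (T × ℕ))
    (hH : ∀ p q : T × ℕ, H.Adj p q ↔ InflAdj ladder p q ∨ InflAdj ladder q p)
    (i : Ordinal.{u})

include hH in
lemma horiz_adj (s : T) (n : ℕ) (hs : i ≤ rk s) :
    (H.induce {p : T × ℕ | i ≤ rk p.1}).Adj ⟨(s, n), hs⟩ ⟨(s, n+1), hs⟩ := by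
  show H.Adj (s, n) (s, n+1)
  exact (hH _ _).mpr (Or.inl (Or.inl ⟨rfl, rfl⟩))

include hH in
lemma horiz_reach (s : T) (n m : ℕ) (hs : i ≤ rk s) :
    (H.induce {p : T × ℕ | i ≤ rk p.1}).Reachable ⟨(s, n), hs⟩ ⟨(s, m), hs⟩ := by
  wlog hnm : n ≤ m generalizing n m
  · exact (this m n (le_of_not_ge hnm)).symm
  obtain ⟨k, rfl⟩ := Nat.exists_eq_add_of_le hnm
  clear hnm
  induction k with
  | zero => rfl
  | succ k IHk => exact IHk.trans (horiz_adj ladder H hH i s (n+k) hs).reachable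

include hladder hH in
lemma reach_down (hchain : ∀ t : T, IsChain (· ≤ ·) (Set.Iic t))
    (t : T) (hti : rk t = i) :
    ∀ s, t ≤ s → ∀ (n : ℕ) (hs : i ≤ rk s),
      (H.induce {p : T × ℕ | i ≤ rk p.1}).Reachable ⟨(s, n), hs⟩
        ⟨(t, 0), le_of_eq hti.symm⟩ := by
  intro s
  induction s using WellFoundedLT.induction with
  | ind s IH =>
    intro hts n hs
    rcases eq_or_lt_of_le hts with rfl | hlt
    · exact horiz_reach ladder H hH i _ n 0 hs
    by_cases hsucc : ∃ s', s' ⋖ s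
    · obtain ⟨s', hcov⟩ := hsucc
      have hts' : t ≤ s' := by
        rcases eq_or_ne t s' with rfl | hne
        · exact le_rfl
        rcases hchain s hlt.le hcov.le hne with h | h
        · exact h
        · exact (hcov.2 (h.lt_of_ne hne.symm) hlt).elim
      have hs'i : i ≤ rk s' := hti ▸ rk_mono hts'
      have hadj : (H.induce {p : T × ℕ | i ≤ rk p.1}).Adj ⟨(s, n), hs⟩
          ⟨(s', n), hs'i⟩ := by
        show H.Adj (s, n) (s', n)
        exact (hH _ _).mpr (Or.inl (Or.inr (Or.inl ⟨rfl, hcov⟩)))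
      exact hadj.reachable.trans (IH s' hcov.lt hts' n hs'i)
    · have hlim : IsLimitPt s := ⟨⟨t, hlt⟩, hsucc⟩
      obtain ⟨hmono, hlt', hcof⟩ := hladder s hlim
      obtain ⟨m, hm⟩ := hcof t hlt
      set n' := max n m with hn'
      have htl : t ≤ ladder s n' := hm.trans (hmono.monotone (le_max_right n m))
      have hrl : i ≤ rk (ladder s n') := hti ▸ rk_mono htl
      have hadj : (H.induce {p : T × ℕ | i ≤ rk p.1}).Adj ⟨(s, n'), hs⟩
          ⟨(ladder s n', n'), hrl⟩ := by
        show H.Adj (s, n') (ladder s n', n')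
        exact (hH _ _).mpr (Or.inl (Or.inr (Or.inr ⟨hlim, rfl⟩)))
      exact ((horiz_reach ladder H hH i s n n' hs).trans hadj.reachable).trans
        (IH _ (hlt' n') htl n' hrl)

include hladder hH in
lemma adj_step (hchain : ∀ t : T, IsChain (· ≤ ·) (Set.Iic t))
    {a b : T × ℕ} (hab : H.Adj a b) (hb : i ≤ rk b.1)
    {s : T} (hsa : s ≤ a.1) (hsi : rk s = i) : s ≤ b.1 := by
  have key : a.1 ≤ b.1 ∨ b.1 ≤ a.1 := by
    rcases (hH _ _).mp hab with h | h
    · rcases h with ⟨h1, _⟩ | ⟨_, h2⟩ | ⟨hlim, heq⟩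
      · exact Or.inl h1.ge
      · exact Or.inr h2.le
      · exact Or.inr (by rw [heq]; exact ((hladder _ hlim).2.1 _).le)
    · rcases h with ⟨h1, _⟩ | ⟨_, h2⟩ | ⟨hlim, heq⟩
      · exact Or.inr h1.ge
      · exact Or.inl h2.le
      · exact Or.inl (by rw [heq]; exact ((hladder _ hlim).2.1 _).le)
  rcases key with h | h
  · exact hsa.trans h
  · rcases eq_or_ne s b.1 with heq | hne
    · exact heq.le
    rcases hchain a.1 hsa h hne with h' | h'
    · exact h'
    · exact absurd hb (not_le.mpr (hsi ▸ rk_strictMono (h'.lt_of_ne hne.symm)))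

include hladder hH in
lemma walk_anc (hchain : ∀ t : T, IsChain (· ≤ ·) (Set.Iic t))
    {p q : {p : T × ℕ // i ≤ rk p.1}}
    (w : (H.induce {p : T × ℕ | i ≤ rk p.1}).Walk p q)
    {s : T} (hsi : rk s = i) (hsp : s ≤ (p : T × ℕ).1) : s ≤ (q : T × ℕ).1 := by
  induction w with
  | nil => exact hsp
  | @cons u v _ h _ IH =>
    exact IH (adj_step ladder hladder H hH i hchain (h : H.Adj u.1 v.1) v.2 hsp hsi)

end Aux
theorem stmt_15 {T : Type u} [PartialOrder T]
    -- order tree with well-ordered down-sets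
    (root : T) (hroot : ∀ t, root ≤ t)
    (hchain : ∀ t : T, IsChain (· ≤ ·) (Set.Iic t))
    [WellFoundedLT T]
    -- of height at most ω₁
    (hheight : ∀ t : T, rk t < (Cardinal.aleph 1).ord)
    -- ladder system: the down-neighbourhoods of a sparse T-graph at limits
    (ladder : T → ℕ → T)
    (hladder : ∀ t : T, IsLimitPt t →
      StrictMono (ladder t) ∧ (∀ n, ladder t n < t) ∧ ∀ s, s < t → ∃ n, s ≤ ladder t n)
    -- H is the ray inflation G ♯ ℕ
    (H : SimpleGraph (T × ℕ))
    (hH : ∀ p q : T × ℕ, H.Adj p q ↔ InflAdj ladder p q ∨ InflAdj ladder q p) :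
    ∀ i : Ordinal.{u}, i < (Cardinal.aleph 1).ord →
      -- the map t ↦ H[⌊t⌋ × ℕ] is a bijection between the i-th level T^i and
      -- the components of H − (T^{<i} × ℕ) ...
      Function.Bijective
        (fun t : {t : T // rk t = i} =>
          (H.induce {p : T × ℕ | i ≤ rk p.1}).connectedComponentMk
            ⟨(t.1, 0), le_of_eq t.2.symm⟩) ∧
      -- ... and the component of t indeed has vertex set ⌊t⌋ × ℕ
      ∀ t : {t : T // rk t = i},
        ((H.induce {p : T × ℕ | i ≤ rk p.1}).connectedComponentMk
            ⟨(t.1, 0), le_of_eq t.2.symm⟩).supp =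
          {q : {p : T × ℕ | i ≤ rk p.1} | t.1 ≤ (q : T × ℕ).1} := by
  intro i _hi
  have hconn : ∀ (t : T) (hti : rk t = i) (q : {p : T × ℕ // i ≤ rk p.1}),
      t ≤ (q : T × ℕ).1 →
      (H.induce {p : T × ℕ | i ≤ rk p.1}).Reachable q ⟨(t, 0), le_of_eq hti.symm⟩ := by
    intro t hti q hq
    exact reach_down ladder hladder H hH i hchain t hti (q : T × ℕ).1 hq (q : T × ℕ).2 q.2
  have hsep : ∀ (t : T), rk t = i → ∀ (p q : {p : T × ℕ // i ≤ rk p.1}),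
      (H.induce {p : T × ℕ | i ≤ rk p.1}).Reachable p q →
      t ≤ (p : T × ℕ).1 → t ≤ (q : T × ℕ).1 := by
    intro t hti p q hr hp
    exact hr.elim fun w => walk_anc ladder hladder H hH i hchain w hti hp
  refine ⟨⟨?_, ?_⟩, ?_⟩
  · intro t t' h
    simp only at h
    have hr := (SimpleGraph.ConnectedComponent.eq).mp h
    have h1 := hsep t.1 t.2 _ _ hr le_rfl
    have h2 := hsep t'.1 t'.2 _ _ hr.symm le_rfl
    exact Subtype.ext (le_antisymm h1 h2)
  · intro c
    induction c using SimpleGraph.ConnectedComponent.ind with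
    | _ p =>
      obtain ⟨s, hs1, hs2⟩ := exists_anc (p : T × ℕ).1 i p.2
      exact ⟨⟨s, hs2⟩, (SimpleGraph.ConnectedComponent.eq).mpr (hconn s hs2 p hs1).symm⟩
  · intro t
    ext q
    simp only [SimpleGraph.ConnectedComponent.mem_supp_iff,
      SimpleGraph.ConnectedComponent.eq, Set.mem_setOf_eq]
    constructor
    · intro hr
      exact hsep t.1 t.2 _ q hr.symm le_rfl
    · intro h
      exact hconn t.1 t.2 q h
end

section
/- Let G be a sparse T-graph for an order tree T of height at most ω₁, and H = G ♯ ℕ its ray inflation. Then all the horizontal rays R_t = H[{t} × ℕ] (t ∈ T) belong to one and the same end of H, and H has only this one end; in particular that end has degree |T| (it contains |T| many pairwise disjoint rays). -/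
open Cardinal

/-- A ray in a graph: a one-way infinite path, given by an injective sequence of
successively adjacent vertices. -/
def IsRay {V : Type u} (G : SimpleGraph V) (R : ℕ → V) : Prop :=
  Function.Injective R ∧ ∀ n, G.Adj (R n) (R (n + 1))

/-- Two rays are equivalent (belong to the same end) if there are infinitely many
pairwise vertex-disjoint paths between them. -/
def RayEquiv {V : Type u} (G : SimpleGraph V) (R₁ R₂ : ℕ → V) : Prop :=
  ∃ (a b : ℕ → V) (w : ∀ n, G.Walk (a n) (b n)),
    (∀ n, (w n).IsPath) ∧
    (∀ n, a n ∈ Set.range R₁) ∧ (∀ n, b n ∈ Set.range R₂) ∧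
    ∀ m n, m ≠ n → ∀ x ∈ (w m).support, x ∉ (w n).support

section Stmt16Aux

open SimpleGraph

variable {T : Type u} [PartialOrder T]

/-- From an infinite set in a well-founded order one can select a sequence in which
no later element lies strictly below an earlier one. -/
lemma stmt16_selection [WellFoundedLT T] {S : Set T} (hS : S.Infinite) :
    ∃ f : ℕ → T, (∀ k, f k ∈ S) ∧ ∀ j k : ℕ, j < k → f k ≠ f j ∧ ¬ f k < f j := by
  have wf : WellFounded ((· < ·) : T → T → Prop) := wellFounded_lt
  let g : ℕ → {s : Set T // s.Infinite} := fun k =>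
    Nat.rec ⟨S, hS⟩
      (fun _ p => ⟨p.1 \ {wf.min p.1 p.2.nonempty}, p.2.diff (Set.finite_singleton _)⟩) k
  let f : ℕ → T := fun k => wf.min (g k).1 (g k).2.nonempty
  have hmono0 : ∀ j d : ℕ, (g (j + d)).1 ⊆ (g j).1 := by
    intro j d
    induction d with
    | zero => exact subset_rfl
    | succ d ih =>
      intro x hx
      have hx' : x ∈ (g (j + d)).1 \ {f (j + d)} := hx
      exact ih hx'.1
  have hmono : ∀ j k : ℕ, j ≤ k → (g k).1 ⊆ (g j).1 := by
    intro j k hjk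
    obtain ⟨d, rfl⟩ := Nat.exists_eq_add_of_le hjk
    exact hmono0 j d
  have hfmem : ∀ k, f k ∈ (g k).1 := fun k => wf.min_mem _ _
  refine ⟨f, fun k => hmono 0 k (Nat.zero_le k) (hfmem k), ?_⟩
  intro j k hjk
  have h1 : f k ∈ (g (j + 1)).1 := hmono (j + 1) k hjk (hfmem k)
  have h1' : f k ∈ (g j).1 \ {f j} := h1
  exact ⟨fun h => h1'.2 (Set.mem_singleton_iff.2 h), wf.not_lt_min _ h1'.1⟩

variable {ladder : T → ℕ → T} {H : SimpleGraph (T × ℕ)}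

lemma stmt16_adj_up (hH : ∀ p q : T × ℕ, H.Adj p q ↔ InflAdj ladder p q ∨ InflAdj ladder q p)
    (t : T) (n : ℕ) : H.Adj (t, n) (t, n + 1) :=
  (hH _ _).2 (Or.inl (Or.inl ⟨rfl, rfl⟩))

lemma stmt16_step (hH : ∀ p q : T × ℕ, H.Adj p q ↔ InflAdj ladder p q ∨ InflAdj ladder q p)
    {p q : T × ℕ} (h : H.Adj p q) : q.2 ≤ p.2 + 1 ∧ p.2 ≤ q.2 + 1 := by
  rcases (hH _ _).1 h with h' | h' <;>
    rcases h' with ⟨_, h2⟩ | ⟨h2, _⟩ | ⟨_, h2⟩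
  · omega
  · omega
  · have : q.2 = p.2 := by rw [h2]
    omega
  · omega
  · omega
  · have : p.2 = q.2 := by rw [h2]
    omega

lemma stmt16_down (root : T) (hroot : ∀ t, root ≤ t) [WellFoundedLT T]
    (hladder : ∀ t : T, IsLimitPt t →
      StrictMono (ladder t) ∧ (∀ n, ladder t n < t) ∧ ∀ s, s < t → ∃ n, s ≤ ladder t n)
    (hH : ∀ p q : T × ℕ, H.Adj p q ↔ InflAdj ladder p q ∨ InflAdj ladder q p)
    (p : T × ℕ) : ∃ w : H.Walk p (root, p.2), ∀ x ∈ w.support, x.1 ≤ p.1 ∧ x.2 = p.2 := by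
  obtain ⟨t, n⟩ := p
  induction t using WellFoundedLT.induction with
  | _ t ih =>
    by_cases ht : t = root
    · subst ht
      refine ⟨Walk.nil, ?_⟩
      intro x hx
      simp only [Walk.support_nil, List.mem_singleton] at hx
      subst hx
      exact ⟨le_rfl, rfl⟩
    · have hlt : root < t := lt_of_le_of_ne (hroot t) (Ne.symm ht)
      by_cases hcov : ∃ s, s ⋖ t
      · obtain ⟨s, hs⟩ := hcov
        have adj : H.Adj (t, n) (s, n) := (hH _ _).2 (Or.inl (Or.inr (Or.inl ⟨rfl, hs⟩)))
        obtain ⟨w, hw⟩ := ih s hs.lt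
        refine ⟨Walk.cons adj w, ?_⟩
        intro x hx
        rw [Walk.support_cons, List.mem_cons] at hx
        rcases hx with rfl | hx
        · exact ⟨le_rfl, rfl⟩
        · obtain ⟨h1, h2⟩ := hw x hx
          exact ⟨h1.trans hs.lt.le, h2⟩
      · have hlim : IsLimitPt t := ⟨⟨root, hlt⟩, hcov⟩
        have hlad : ladder t n < t := (hladder t hlim).2.1 n
        have adj : H.Adj (t, n) (ladder t n, n) :=
          (hH _ _).2 (Or.inl (Or.inr (Or.inr ⟨hlim, rfl⟩)))
        obtain ⟨w, hw⟩ := ih (ladder t n) hlad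
        refine ⟨Walk.cons adj w, ?_⟩
        intro x hx
        rw [Walk.support_cons, List.mem_cons] at hx
        rcases hx with rfl | hx
        · exact ⟨le_rfl, rfl⟩
        · obtain ⟨h1, h2⟩ := hw x hx
          exact ⟨h1.trans hlad.le, h2⟩

lemma stmt16_up (hH : ∀ p q : T × ℕ, H.Adj p q ↔ InflAdj ladder p q ∨ InflAdj ladder q p)
    (t : T) (n N : ℕ) (hN : n ≤ N) :
    ∃ w : H.Walk (t, n) (t, N), ∀ x ∈ w.support, x.1 = t ∧ n ≤ x.2 ∧ x.2 ≤ N := by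
  induction N, hN using Nat.le_induction with
  | base =>
    refine ⟨Walk.nil, ?_⟩
    intro x hx
    simp only [Walk.support_nil, List.mem_singleton] at hx
    subst hx
    exact ⟨rfl, le_rfl, le_rfl⟩
  | succ N hN ih =>
    obtain ⟨w, hw⟩ := ih
    refine ⟨w.concat (stmt16_adj_up hH t N), ?_⟩
    intro x hx
    rw [Walk.support_concat, List.mem_append, List.mem_singleton] at hx
    rcases hx with hx | rfl
    · obtain ⟨h1, h2, h3⟩ := hw x hx
      exact ⟨h1, h2, h3.trans (Nat.le_succ N)⟩
    · exact ⟨rfl, hN.trans (Nat.le_succ N), le_rfl⟩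

lemma stmt16_hit [Finite T]
    (hH : ∀ p q : T × ℕ, H.Adj p q ↔ InflAdj ladder p q ∨ InflAdj ladder q p)
    {R : ℕ → T × ℕ} (hR : IsRay H R) (N : ℕ) (hN : (R 0).2 ≤ N) :
    ∃ m, (R m).2 = N := by
  classical
  have hex : ∃ m, N ≤ (R m).2 := by
    by_contra hcon
    push_neg at hcon
    have hsub : Set.range R ⊆ (Set.univ ×ˢ Set.Iio N) := by
      rintro _ ⟨m, rfl⟩
      exact ⟨Set.mem_univ _, hcon m⟩
    exact (Set.infinite_range_of_injective hR.1)
      ((Set.finite_univ.prod (Set.finite_Iio N)).subset hsub)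
  have hm : N ≤ (R (Nat.find hex)).2 := Nat.find_spec hex
  rcases Nat.eq_zero_or_pos (Nat.find hex) with h0 | hpos
  · exact ⟨0, le_antisymm hN (h0 ▸ hm)⟩
  · obtain ⟨k, hk⟩ := Nat.exists_eq_succ_of_ne_zero (Nat.pos_iff_ne_zero.1 hpos)
    rw [Nat.succ_eq_add_one] at hk
    have hk' : ¬ N ≤ (R k).2 := Nat.find_min hex (by omega)
    rw [not_le] at hk'
    have hstep := (stmt16_step hH (hR.2 k)).1
    refine ⟨Nat.find hex, ?_⟩
    rw [hk] at hm ⊢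
    omega

end Stmt16Aux

open SimpleGraph

theorem stmt_16 {T : Type u} [PartialOrder T]
    (root : T) (hroot : ∀ t, root ≤ t)
    (hchain : ∀ t : T, IsChain (· ≤ ·) (Set.Iic t))
    [WellFoundedLT T]
    (hheight : ∀ t : T, rk t < (Cardinal.aleph 1).ord)
    (ladder : T → ℕ → T)
    (hladder : ∀ t : T, IsLimitPt t →
      StrictMono (ladder t) ∧ (∀ n, ladder t n < t) ∧ ∀ s, s < t → ∃ n, s ≤ ladder t n)
    (H : SimpleGraph (T × ℕ))
    (hH : ∀ p q : T × ℕ, H.Adj p q ↔ InflAdj ladder p q ∨ InflAdj ladder q p) :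
    -- the horizontal rays R_t are rays of H and pairwise disjoint ...
    (∀ t : T, IsRay H (fun n => (t, n))) ∧
    (∀ t s : T, t ≠ s → ∀ n m : ℕ, (t, n) ≠ (s, m)) ∧
    -- ... all equivalent to one another ...
    (∀ t s : T, RayEquiv H (fun n => (t, n)) (fun n => (s, n))) ∧
    -- ... H has only this one end ...
    (∀ R : ℕ → T × ℕ, IsRay H R → RayEquiv H R (fun n => (root, n))) ∧
    -- ... and the end has degree |T|: no family of pairwise disjoint rays is larger
    (∀ (ι : Type u) (Rf : ι → ℕ → T × ℕ), (∀ i, IsRay H (Rf i)) →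
      (∀ i j, i ≠ j → ∀ n m, Rf i n ≠ Rf j m) → #ι ≤ #T) := by
  classical
  have hdown := stmt16_down root hroot hladder hH
  have hup := stmt16_up hH
  refine ⟨?_, ?_, ?_, ?_, ?_⟩
  · -- the horizontal rays are rays
    intro t
    exact ⟨fun a b h => congrArg Prod.snd h, fun n => stmt16_adj_up hH t n⟩
  · -- pairwise disjoint
    intro t s hts n m h
    exact hts (congrArg Prod.fst h)
  · -- all equivalent
    intro t s
    have W : ∀ n : ℕ, ∃ w : H.Walk (t, n) (s, n), ∀ x ∈ w.support, x.2 = n := by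
      intro n
      obtain ⟨w1, h1⟩ := hdown (t, n)
      obtain ⟨w2, h2⟩ := hdown (s, n)
      refine ⟨w1.append w2.reverse, ?_⟩
      intro x hx
      rcases (Walk.mem_support_append_iff _ _).1 hx with hx | hx
      · exact (h1 x hx).2
      · rw [Walk.support_reverse, List.mem_reverse] at hx
        exact (h2 x hx).2
    choose w hw using W
    refine ⟨fun n => (t, n), fun n => (s, n), fun n => (w n).bypass,
      fun n => Walk.bypass_isPath _, fun n => ⟨n, rfl⟩, fun n => ⟨n, rfl⟩, ?_⟩
    intro a b hab x hxa hxb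
    have h1 := hw a x (Walk.support_bypass_subset _ hxa)
    have h2 := hw b x (Walk.support_bypass_subset _ hxb)
    exact hab (h1.symm.trans h2)
  · -- only one end
    intro R hR
    by_cases hLv : (Set.range fun m => (R m).2).Infinite
    · -- levels along R are unbounded
      set e := hLv.natEmbedding with he
      choose m hm0 using fun k => (e k).2
      have hm : ∀ k : ℕ, (R (m k)).2 = (e k : ℕ) := hm0
      choose w hw using fun k => hdown (R (m k))
      refine ⟨fun k => R (m k), fun k => (root, (e k : ℕ)),
        fun k => ((w k).copy rfl (by rw [hm k])).bypass,
        fun k => Walk.bypass_isPath _,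
        fun k => ⟨m k, rfl⟩, fun k => ⟨(e k : ℕ), rfl⟩, ?_⟩
      intro a b hab x hxa hxb
      have hxa' : x ∈ (w a).support := by
        have := Walk.support_bypass_subset _ hxa
        rwa [Walk.support_copy] at this
      have hxb' : x ∈ (w b).support := by
        have := Walk.support_bypass_subset _ hxb
        rwa [Walk.support_copy] at this
      have h1 : x.2 = (e a : ℕ) := by rw [(hw a x hxa').2, hm a]
      have h2 : x.2 = (e b : ℕ) := by rw [(hw b x hxb').2, hm b]
      exact hab (e.injective (Subtype.ext (h1.symm.trans h2)))
    · -- levels along R are bounded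
      rw [Set.not_infinite] at hLv
      have hfib : ∃ n, {mm | (R mm).2 = n}.Infinite := by
        by_contra hcon
        push_neg at hcon
        have hfin : (Set.univ : Set ℕ).Finite := by
          refine Set.Finite.subset (hLv.biUnion fun n _ => hcon n) ?_
          intro mm _
          exact Set.mem_biUnion ⟨mm, rfl⟩ rfl
        exact Set.infinite_univ hfin
      obtain ⟨n, hn⟩ := hfib
      have hSinf : ((fun mm => (R mm).1) '' {mm | (R mm).2 = n}).Infinite := by
        refine hn.image ?_
        intro a ha b hb hab
        exact hR.1 (Prod.ext hab (ha.trans hb.symm))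
      obtain ⟨f, hfS, hford⟩ := stmt16_selection hSinf
      have hidx : ∀ k, ∃ mm, (R mm).2 = n ∧ (R mm).1 = f k := by
        intro k
        obtain ⟨mm, hmm, hmm2⟩ := hfS k
        exact ⟨mm, hmm, hmm2⟩
      choose m hm1 hm2 using hidx
      have hwalk : ∀ k : ℕ, ∃ ww : H.Walk (R (m k)) (root, n + k + 1),
          ∀ x ∈ ww.support,
            (x.1 = f k ∧ n ≤ x.2 ∧ x.2 ≤ n + k + 1) ∨ (x.1 ≤ f k ∧ x.2 = n + k + 1) := by
        intro k
        obtain ⟨w1, h1⟩ := hup (f k) n (n + k + 1) (by omega)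
        obtain ⟨w2, h2⟩ := hdown (f k, n + k + 1)
        refine ⟨(w1.append w2).copy (by rw [← hm2 k, ← hm1 k]) rfl, ?_⟩
        intro x hx
        rw [Walk.support_copy] at hx
        rcases (Walk.mem_support_append_iff _ _).1 hx with hx | hx
        · exact Or.inl (h1 x hx)
        · exact Or.inr (h2 x hx)
      choose ww hww using hwalk
      have key : ∀ j k : ℕ, j < k → ∀ x : T × ℕ,
          x ∈ (ww j).support → x ∈ (ww k).support → False := by
        intro j k hjk x hxj hxk
        obtain ⟨hne, hnlt⟩ := hford j k hjk
        rcases hww j x hxj with ⟨e1, e2, e3⟩ | ⟨e1, e2⟩ <;>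
          rcases hww k x hxk with ⟨d1, d2, d3⟩ | ⟨d1, d2⟩
        · exact hne (d1.symm.trans e1)
        · omega
        · have hle : f k ≤ f j := by rw [← d1]; exact e1
          exact hnlt (lt_of_le_of_ne hle hne)
        · omega
      refine ⟨fun k => R (m k), fun k => (root, n + k + 1), fun k => (ww k).bypass,
        fun k => Walk.bypass_isPath _, fun k => ⟨m k, rfl⟩, fun k => ⟨n + k + 1, rfl⟩, ?_⟩
      intro a b hab x hxa hxb
      have hxa' := Walk.support_bypass_subset _ hxa
      have hxb' := Walk.support_bypass_subset _ hxb
      rcases Nat.lt_or_ge a b with h | h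
      · exact key a b h x hxa' hxb'
      · exact key b a (lt_of_le_of_ne h (Ne.symm hab)) x hxb' hxa'
  · -- degree of the end
    intro ι Rf hray hdisj
    have hinj : Function.Injective fun i => Rf i 0 := by
      intro i j h
      by_contra hne
      exact hdisj i j hne 0 0 h
    by_cases hT : Finite T
    · haveI := hT
      haveI := Fintype.ofFinite T
      by_contra hcon
      rw [not_le] at hcon
      have h1 : ((Fintype.card T : ℕ) : Cardinal.{u}) < #ι := by
        rwa [Cardinal.mk_fintype] at hcon
      have h2 : #(ULift.{u} (Fin (Fintype.card T + 1))) ≤ #ι := by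
        have hcard : #(ULift.{u} (Fin (Fintype.card T + 1)))
            = ((Fintype.card T + 1 : ℕ) : Cardinal.{u}) := by simp
        rw [hcard, Cardinal.nat_succ]
        exact Order.succ_le_of_lt h1
      obtain ⟨g⟩ := (Cardinal.le_def _ _).1 h2
      set N : ℕ := Finset.univ.sup
        (fun x : ULift.{u} (Fin (Fintype.card T + 1)) => (Rf (g x) 0).2) with hNdef
      have hhit : ∀ x, ∃ mm, (Rf (g x) mm).2 = N := by
        intro x
        refine stmt16_hit hH (hray (g x)) N ?_
        rw [hNdef]
        exact Finset.le_sup (f := fun x => (Rf (g x) 0).2) (Finset.mem_univ x)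
      choose mm hmm using hhit
      have hinj2 : Function.Injective fun x => (Rf (g x) (mm x)).1 := by
        intro x y hxy
        by_contra hne
        have hgne : g x ≠ g y := fun h => hne (g.injective h)
        exact hdisj (g x) (g y) hgne (mm x) (mm y)
          (Prod.ext hxy ((hmm x).trans (hmm y).symm))
      have hcard := Fintype.card_le_of_injective _ hinj2
      simp only [Fintype.card_ulift, Fintype.card_fin] at hcard
      omega
    · haveI : Infinite T := not_finite_iff_infinite.1 hT
      have h1 : #ι ≤ #(T × ℕ) := Cardinal.mk_le_of_injective hinj
      have h2 : #(T × ℕ) = #T := by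
        rw [Cardinal.mk_prod, Cardinal.lift_uzero, Cardinal.mk_nat, Cardinal.lift_aleph0]
        exact Cardinal.mul_aleph0_eq (Cardinal.aleph0_le_mk T)
      rwa [h2] at h1
end

section
/- Let T be an Aronszajn tree and G a T-graph satisfying property (⋆): for every t ∈ T there is a finite S_t ⊆ {t' : t' < t} such that every t'' > t has all of its down-neighbours below t inside S_t. Then the ray inflation H = G ♯ ℕ satisfies (⋆⋆): for every t ∈ T there is a finite S_t ⊆ {t' : t' < t} such that every vertex (t'', n) of H with t'' > t and n ∈ ℕ has N_H((t'',n)) ∩ ({t' : t' < t} × ℕ) ⊆ S_t × |S_t|. -/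
open Cardinal

theorem stmt_17 {T : Type u} [PartialOrder T]
    -- T is an order tree ...
    (root : T) (hroot : ∀ t, root ≤ t)
    (hchain : ∀ t : T, IsChain (· ≤ ·) (Set.Iic t))
    [WellFoundedLT T]
    -- ... which is Aronszajn: size ℵ₁, countable branches and countable levels
    (hsize : #T = Cardinal.aleph 1)
    (hbranch : ∀ C : Set T, IsMaxChain (· ≤ ·) C → C.Countable)
    (hlevel : ∀ o : Ordinal.{u}, {t : T | rk t = o}.Countable)
    -- G is a sparse T-graph: edges only between comparable nodes, lower
    -- neighbourhoods cofinal, at limits given exactly by the ladder system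
    (G : SimpleGraph T) (ladder : T → ℕ → T)
    (hGcomp : ∀ s t : T, G.Adj s t → s < t ∨ t < s)
    (hGcof : ∀ t s : T, s < t → ∃ s' : T, G.Adj s' t ∧ s ≤ s' ∧ s' < t)
    (hGladder : ∀ t : T, IsLimitPt t →
      StrictMono (ladder t) ∧ (∀ n, G.Adj (ladder t n) t ∧ ladder t n < t) ∧
      ∀ s : T, G.Adj s t → s < t → ∃ n, s = ladder t n)
    -- property (⋆)
    (hstar : ∀ t : T, ∃ St : Finset T, (∀ s ∈ St, s < t) ∧
      ∀ t'' : T, t < t'' → ∀ s : T, G.Adj s t'' → s < t'' → s < t → s ∈ St)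
    -- H is the ray inflation G ♯ ℕ
    (H : SimpleGraph (T × ℕ))
    (hH : ∀ p q : T × ℕ, H.Adj p q ↔ InflAdj ladder p q ∨ InflAdj ladder q p) :
    -- property (⋆⋆) : N_H((t'',n)) ∩ ({t' < t} × ℕ) ⊆ S_t × |S_t|
    ∀ t : T, ∃ St : Finset T, (∀ s ∈ St, s < t) ∧
      ∀ t'' : T, t < t'' → ∀ n : ℕ, ∀ q : T × ℕ,
        H.Adj q (t'', n) → q.1 < t → q.1 ∈ St ∧ q.2 < St.card := by
  intro t
  obtain ⟨St, hSt, hStar⟩ := hstar t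
  refine ⟨St, hSt, ?_⟩
  intro t'' ht n q hadj hqt
  rw [hH] at hadj
  rcases hadj with (⟨h1, _⟩ | ⟨_, h2⟩ | ⟨hlim, heq⟩) | (⟨h1, _⟩ | ⟨_, h2⟩ | ⟨hlim, heq⟩)
  · have h1' : t'' = q.1 := h1
    exact (lt_irrefl t (ht.trans (h1' ▸ hqt))).elim
  · have h2' : t'' < q.1 := h2.lt
    exact (lt_irrefl t'' (h2'.trans (hqt.trans ht))).elim
  · obtain ⟨_, hl, _⟩ := hGladder q.1 hlim
    have h3 : t'' = ladder q.1 q.2 := congrArg Prod.fst heq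
    have : t'' < q.1 := h3 ▸ (hl q.2).2
    exact (lt_irrefl t'' (this.trans (hqt.trans ht))).elim
  · have h1' : q.1 = t'' := h1
    have : t'' < t := h1' ▸ hqt
    exact (lt_irrefl t (ht.trans this)).elim
  · have h2' : q.1 ⋖ t'' := h2
    exact ((h2'.2 hqt) ht).elim
  · obtain ⟨hmono, hl, _⟩ := hGladder t'' hlim
    have hq1 : q.1 = ladder t'' n := congrArg Prod.fst heq
    have hq2 : q.2 = n := congrArg Prod.snd heq
    have hmem : ∀ k ≤ n, ladder t'' k ∈ St := by
      intro k hk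
      have hlt : ladder t'' k < t :=
        lt_of_le_of_lt (hmono.monotone hk) (hq1 ▸ hqt)
      exact hStar t'' ht _ (hl k).1 (hl k).2 hlt
    have hcard : n + 1 ≤ St.card := by
      have := Finset.card_le_card_of_injOn (fun k => ladder t'' k)
        (fun k hk => hmem k (Nat.lt_succ_iff.mp (Finset.mem_range.mp hk)))
        (fun a _ b _ h => hmono.injective h)
      simpa using this
    exact ⟨hq1 ▸ hmem n le_rfl, hq2 ▸ Nat.lt_of_succ_le hcard⟩
end

section
/- Let ε be an end of a graph G and U a countable set of vertices. If there is an uncountable collection C of pairwise internally disjoint ε–U combs in G, then G contains a |C|-star of rays all belonging to ε: a ray R together with |C| many pairwise disjoint rays (R_i), each R_i a spine of a comb in C, disjoint from R, and for each i an infinite family of disjoint R_i–R paths such that paths from distinct families meet only in R. -/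
open Cardinal

section StarAuxSec

open SimpleGraph

namespace StarAux

variable {V : Type u} {G : SimpleGraph V}

lemma getVert_eq_getElem {a c : V} (p : G.Walk a c) (i : ℕ) (hi : i ≤ p.length) :
    p.getVert i = p.support[i]'(by rw [Walk.length_support]; omega) := by
  induction p generalizing i with
  | nil =>
    have : i = 0 := by simpa using hi
    subst this
    simp [Walk.getVert]
  | cons h q ih =>
    cases i with
    | zero => simp [Walk.getVert]
    | succ i =>
      simp only [Walk.getVert_cons_succ, Walk.support_cons, List.getElem_cons_succ]
      exact ih i (by simpa using hi)

lemma getVert_inj {a c : V} {p : G.Walk a c} (hp : p.IsPath) {i j : ℕ}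
    (hi : i ≤ p.length) (hj : j ≤ p.length) (h : p.getVert i = p.getVert j) : i = j := by
  rw [getVert_eq_getElem p i hi, getVert_eq_getElem p j hj] at h
  have := hp.support_nodup
  rw [List.nodup_iff_injective_getElem] at this
  have h2 := @this ⟨i, by rw [Walk.length_support]; omega⟩ ⟨j, by rw [Walk.length_support]; omega⟩ h
  simpa using congrArg Fin.val h2

lemma append_isPath {x y z : V} {p : G.Walk x y} {q : G.Walk y z}
    (hp : p.IsPath) (hq : q.IsPath) (h : ∀ v ∈ p.support, v ∈ q.support → v = y) :
    (p.append q).IsPath := by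
  rw [Walk.isPath_def, Walk.support_append]
  have hy : y ∉ q.support.tail := by
    have := hq.support_nodup
    rw [q.support_eq_cons] at this
    exact (List.nodup_cons.mp this).1
  refine List.Nodup.append hp.support_nodup (hq.support_nodup.sublist (List.tail_sublist _)) ?_
  intro v hv1 hv2
  have := h v hv1 (List.mem_of_mem_tail hv2)
  subst this
  exact hy hv2

lemma exists_suffix_walk {x z : V} (p : G.Walk x z) (S : Set V)
    (hne : ∃ v ∈ p.support, v ∈ S) :
    ∃ x', x' ∈ S ∧ ∃ q : G.Walk x' z, (∀ v ∈ q.support, v ∈ p.support) ∧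
      (∀ v ∈ q.support, v ∈ S → v = x') ∧ (p.IsPath → q.IsPath) := by
  induction p with
  | @nil u =>
    refine ⟨u, by simpa using hne, Walk.nil, by simp, ?_, fun h => h⟩
    intro v hv _
    simpa using hv
  | @cons x b z h p ih =>
    by_cases hc : ∃ v ∈ p.support, v ∈ S
    · obtain ⟨x', hx', q, h1, h2, h3⟩ := ih hc
      refine ⟨x', hx', q, ?_, h2, fun hp => h3 hp.of_cons⟩
      intro v hv
      simp only [Walk.support_cons, List.mem_cons]
      exact Or.inr (h1 v hv)
    · obtain ⟨v, hv, hvS⟩ := hne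
      have hvx : v = x := by
        rcases (by simpa using hv : v = x ∨ v ∈ p.support) with h' | h'
        · exact h'
        · exact absurd ⟨v, h', hvS⟩ hc
      subst hvx
      refine ⟨v, hvS, Walk.cons h p, fun _ hv => hv, ?_, fun hp => hp⟩
      intro u hu huS
      rcases (by simpa using hu : u = v ∨ u ∈ p.support) with h' | h'
      · exact h'
      · exact absurd ⟨u, h', huS⟩ hc

lemma ray_walk {R : ℕ → V} (hR : Function.Injective R ∧ ∀ n, G.Adj (R n) (R (n+1))) (m k : ℕ) :
    ∃ Q : G.Walk (R m) (R (m + k)), Q.IsPath ∧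
      (∀ v ∈ Q.support, ∃ j, m ≤ j ∧ j ≤ m + k ∧ v = R j) ∧
      (∀ j, m ≤ j → j ≤ m + k → R j ∈ Q.support) := by
  induction k with
  | zero =>
    refine ⟨Walk.nil, Walk.IsPath.nil, ?_, ?_⟩
    · intro v hv; exact ⟨m, le_rfl, le_rfl, by simpa using hv⟩
    · intro j h1 h2; have : j = m := by omega
      subst this; simp
  | succ k ih =>
    obtain ⟨Q, hQ, h1, h2⟩ := ih
    refine ⟨Q.concat (hR.2 (m + k)), ?_, ?_, ?_⟩
    · rw [Walk.concat_eq_append]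
      have hne : R (m + k) ≠ R (m + (k + 1)) := fun h => absurd (hR.1 h) (by omega)
      refine append_isPath hQ (by simp [Walk.isPath_def, hne]) ?_
      intro v hv1 hv2
      obtain ⟨j, hj1, hj2, rfl⟩ := h1 v hv1
      rcases (by simpa using hv2 : R j = R (m + k) ∨ R j = R (m + (k + 1))) with h' | h'
      · exact h'
      · exact absurd (hR.1 h') (by omega)
    · intro v hv
      rw [Walk.support_concat, List.mem_append] at hv
      rcases hv with hv | hv
      · obtain ⟨j, hj1, hj2, rfl⟩ := h1 v hv
        exact ⟨j, hj1, by omega, rfl⟩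
      · exact ⟨m + (k + 1), by omega, by omega, by simpa using hv⟩
    · intro j hj1 hj2
      rw [Walk.support_concat, List.mem_append]
      by_cases hj : j ≤ m + k
      · exact Or.inl (h2 j hj1 hj)
      · have : j = m + k + 1 := by omega
        subst this
        exact Or.inr (List.mem_singleton.mpr rfl)

lemma finite_meets [Nonempty V] {κ : Type v} {s : κ → Set V}
    (hd : ∀ i j, i ≠ j → ∀ x, x ∈ s i → x ∉ s j) {F : Set V} (hF : F.Finite) :
    {i | ∃ x, x ∈ s i ∧ x ∈ F}.Finite := by
  classical
  set T := {i | ∃ x, x ∈ s i ∧ x ∈ F}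
  let f : κ → V := fun i => if h : ∃ x, x ∈ s i ∧ x ∈ F then h.choose else Classical.arbitrary V
  have hmem : ∀ i ∈ T, f i ∈ s i ∧ f i ∈ F := by
    intro i hi
    have hi' : ∃ x, x ∈ s i ∧ x ∈ F := hi
    show f i ∈ s i ∧ f i ∈ F
    simp only [f]
    rw [dif_pos hi']
    exact hi'.choose_spec
  have himg : f '' T ⊆ F := by rintro - ⟨i, hi, rfl⟩; exact (hmem i hi).2
  refine Set.Finite.of_finite_image (hF.subset himg) ?_
  intro i hi j hj hij
  by_contra hne
  exact hd i j hne (f i) (hmem i hi).1 (hij ▸ (hmem j hj).1)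

lemma countable_meets [Nonempty V] {κ : Type v} {s : κ → Set V}
    (hd : ∀ i j, i ≠ j → ∀ x, x ∈ s i → x ∉ s j) {F : Set V} (hF : F.Countable) :
    {i | ∃ x, x ∈ s i ∧ x ∈ F}.Countable := by
  classical
  set T := {i | ∃ x, x ∈ s i ∧ x ∈ F}
  let f : κ → V := fun i => if h : ∃ x, x ∈ s i ∧ x ∈ F then h.choose else Classical.arbitrary V
  have hmem : ∀ i ∈ T, f i ∈ s i ∧ f i ∈ F := by
    intro i hi
    have hi' : ∃ x, x ∈ s i ∧ x ∈ F := hi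
    show f i ∈ s i ∧ f i ∈ F
    simp only [f]
    rw [dif_pos hi']
    exact hi'.choose_spec
  have himg : f '' T ⊆ F := by rintro - ⟨i, hi, rfl⟩; exact (hmem i hi).2
  refine Set.countable_of_injective_of_countable_image ?_ (hF.mono himg)
  intro i hi j hj hij
  by_contra hne
  exact hd i j hne (f i) (hmem i hi).1 (hij ▸ (hmem j hj).1)

end StarAux

end StarAuxSec

theorem stmt_18 {V : Type u} (G : SimpleGraph V)
    -- an end ε of G, represented by a ray Rε
    (Rε : ℕ → V) (hRε : IsRay G Rε)
    -- a countable set U of vertices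
    (U : Set V) (hU : U.Countable)
    -- an uncountable collection, indexed by ι, of ε–U combs:
    (ι : Type u) (hunc : ℵ₀ < #ι)
    -- spines: rays in ε avoiding U
    (R : ι → ℕ → V) (hR : ∀ i, IsRay G (R i))
    (hRend : ∀ i, RayEquiv G (R i) Rε)
    (hRU : ∀ i n, R i n ∉ U)
    -- for each comb, an infinite family of disjoint paths from its spine to U,
    -- meeting U only in their last vertex (the teeth)
    (a b : ι → ℕ → V) (w : ∀ i n, G.Walk (a i n) (b i n))
    (hw : ∀ i n, (w i n).IsPath)
    (ha : ∀ i n, a i n ∈ Set.range (R i))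
    (hb : ∀ i n, b i n ∈ U)
    (hwU : ∀ i n, ∀ x ∈ (w i n).support, x ∈ U → x = b i n)
    (hwdisj : ∀ i, ∀ m n : ℕ, m ≠ n → ∀ x ∈ (w i m).support, x ∉ (w i n).support)
    -- the combs are internally disjoint: their interiors (comb minus U) are disjoint
    (hint : ∀ i j, i ≠ j → ∀ x : V,
      x ∈ (Set.range (R i) ∪ ⋃ n, {y | y ∈ (w i n).support}) \ U →
      x ∉ (Set.range (R j) ∪ ⋃ n, {y | y ∈ (w j n).support}) \ U) :
    -- then G contains a |C|-star of rays in ε whose leaf rays are spines of the combs: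
    ∃ R₀ : ℕ → V, IsRay G R₀ ∧ RayEquiv G R₀ Rε ∧
      ∃ J : Set ι, #J = #ι ∧
        -- the leaf rays are disjoint from the centre ray R₀
        (∀ i ∈ J, ∀ n m : ℕ, R i n ≠ R₀ m) ∧
        ∃ (p q : ι → ℕ → V) (ww : ∀ i n, G.Walk (p i n) (q i n)),
          -- for each leaf, an infinite family of R_i–R₀ paths
          (∀ i ∈ J, ∀ n, (ww i n).IsPath ∧
            p i n ∈ Set.range (R i) ∧ q i n ∈ Set.range R₀) ∧
          -- independent: only their endvertices lie on the rays
          (∀ i ∈ J, ∀ n, ∀ x ∈ (ww i n).support,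
            (x ≠ p i n → x ∉ Set.range (R i)) ∧ (x ≠ q i n → x ∉ Set.range R₀)) ∧
          -- paths within a family are disjoint
          (∀ i ∈ J, ∀ m n : ℕ, m ≠ n → ∀ x ∈ (ww i m).support, x ∉ (ww i n).support) ∧
          -- paths from distinct families meet only in R₀
          (∀ i ∈ J, ∀ j ∈ J, i ≠ j → ∀ m n : ℕ, ∀ x : V,
            x ∈ (ww i m).support → x ∈ (ww j n).support → x ∈ Set.range R₀) := by
  classical
  haveI : Nonempty V := ⟨Rε 0⟩
  -- interiors of the combs
  set interior : ι → Set V :=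
    fun i => (Set.range (R i) ∪ ⋃ n, {y | y ∈ (w i n).support}) \ U with hinterior
  have hintd : ∀ i j, i ≠ j → ∀ x, x ∈ interior i → x ∉ interior j := hint
  have hsuppint : ∀ i n x, x ∈ (w i n).support → x ∉ U → x ∈ interior i := by
    intro i n x hx hxU
    exact ⟨Or.inr (Set.mem_iUnion.mpr ⟨n, hx⟩), hxU⟩
  have hspineint : ∀ i m, R i m ∈ interior i := fun i m => ⟨Or.inl ⟨m, rfl⟩, hRU i m⟩
  -- dominating teeth
  set Dom : Set V := {u | u ∈ U ∧ {i : ι | ∃ n, b i n = u}.Infinite} with hDomdef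
  have hDomC : Dom.Countable := hU.mono fun u hu => hu.1
  -- segments of the reference ray
  have seg : ∀ (m t : ℕ), m ≤ t → ∃ Q : G.Walk (Rε m) (Rε t), Q.IsPath ∧
      (∀ v ∈ Q.support, ∃ j, m ≤ j ∧ j ≤ t ∧ v = Rε j) ∧
      (∀ j, m ≤ j → j ≤ t → Rε j ∈ Q.support) := by
    intro m t hmt
    obtain ⟨Q, h1, h2, h3⟩ := StarAux.ray_walk hRε m (t - m)
    have htm : m + (t - m) = t := by omega
    refine ⟨Q.copy rfl (congrArg Rε htm), by simpa using h1, ?_, ?_⟩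
    · intro v hv
      rw [SimpleGraph.Walk.support_copy] at hv
      obtain ⟨j, hj1, hj2, rfl⟩ := h2 v hv
      exact ⟨j, hj1, by omega, rfl⟩
    · intro j hj1 hj2
      rw [SimpleGraph.Walk.support_copy]
      exact h3 j hj1 (by omega)
  -- walks along the spine of a comb
  have spineWalk : ∀ (i : ι) (m M : ℕ), ∃ Q : G.Walk (R i m) (R i M), Q.IsPath ∧
      ∀ v ∈ Q.support, v ∈ Set.range (R i) := by
    intro i m M
    rcases le_total m M with h | h
    · obtain ⟨Q, h1, h2, _⟩ := StarAux.ray_walk (hR i) m (M - m)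
      have hmM : m + (M - m) = M := by omega
      refine ⟨Q.copy rfl (congrArg (R i) hmM), by simpa using h1, ?_⟩
      intro v hv
      rw [SimpleGraph.Walk.support_copy] at hv
      obtain ⟨j, _, _, rfl⟩ := h2 v hv
      exact ⟨j, rfl⟩
    · obtain ⟨Q, h1, h2, _⟩ := StarAux.ray_walk (hR i) M (m - M)
      have hmM : M + (m - M) = m := by omega
      refine ⟨(Q.copy rfl (congrArg (R i) hmM)).reverse, by simpa using h1.reverse, ?_⟩
      intro v hv
      rw [SimpleGraph.Walk.support_reverse, List.mem_reverse, SimpleGraph.Walk.support_copy] at hv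
      obtain ⟨j, _, _, rfl⟩ := h2 v hv
      exact ⟨j, rfl⟩
  -- the tendril lemma: from a dominating tooth we can reach Rε far out, avoiding a finite set
  have tendril : ∀ d, d ∈ Dom → ∀ F : Set V, F.Finite → d ∉ F → ∀ N : ℕ,
      ∃ t, N < t ∧ ∃ A : G.Walk d (Rε t), A.IsPath ∧ (∀ x ∈ A.support, x ∉ F) ∧
        (∀ x ∈ A.support, x ∈ Set.range Rε → x = d ∨ x = Rε t) := by
    intro d hd F hF hdF N
    set F₂ : Set V := (F ∪ Rε '' {j | j ≤ N}) \ {d} with hF₂def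
    have hF₂fin : F₂.Finite := (hF.union ((Set.finite_Iic N).image Rε)).diff
    have hdF₂ : d ∉ F₂ := fun h => h.2 rfl
    have hF₂F : ∀ x, x ∈ F → x ≠ d → x ∈ F₂ := fun x hx hxd => ⟨Or.inl hx, hxd⟩
    have hF₂N : ∀ j, j ≤ N → Rε j ≠ d → Rε j ∈ F₂ := fun j hj hjd => ⟨Or.inr ⟨j, hj, rfl⟩, hjd⟩
    -- pick a comb through d whose interior avoids F₂
    have hbadI : {i : ι | ∃ x, x ∈ interior i ∧ x ∈ F₂}.Finite := StarAux.finite_meets hintd hF₂fin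
    obtain ⟨i, hiI, hibad⟩ := (hd.2.diff hbadI).nonempty
    obtain ⟨n, hbn⟩ := hiI
    have hiF₂ : ∀ x, x ∈ interior i → x ∉ F₂ := fun x hx hx2 => hibad ⟨x, hx, hx2⟩
    -- pick a connector from the spine of the comb to Rε avoiding F₂
    obtain ⟨a', b', w', hw'p, ha', hb', hw'd⟩ := hRend i
    have hbadk : {k : ℕ | ∃ x, x ∈ {y | y ∈ (w' k).support} ∧ x ∈ F₂}.Finite :=
      StarAux.finite_meets (s := fun k => {y | y ∈ (w' k).support}) hw'd hF₂fin
    have hbadk2 : {k : ℕ | b' k = d}.Finite := Set.Subsingleton.finite (by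
      intro k hk l hl
      by_contra hne
      refine hw'd k l hne (b' k) (w' k).end_mem_support ?_
      have : b' k = b' l := by rw [hk, hl]
      rw [this]
      exact (w' l).end_mem_support)
    obtain ⟨k, hk⟩ := ((hbadk.union hbadk2).infinite_compl).nonempty
    have hkF₂ : ∀ x ∈ (w' k).support, x ∉ F₂ := by
      intro x hx hx2
      exact hk (Or.inl ⟨x, hx, hx2⟩)
    have hkd : b' k ≠ d := fun h => hk (Or.inr h)
    obtain ⟨m₀, ham⟩ := ha i n
    obtain ⟨M, haM⟩ := ha' k
    obtain ⟨T, hbT⟩ := hb' k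
    obtain ⟨W2, hW2p, hW2s⟩ := spineWalk i m₀ M
    -- assemble a walk from d to Rε T
    let W1 : G.Walk d (a i n) := ((w i n).copy rfl hbn).reverse
    let W2' : G.Walk (a i n) (a' k) := W2.copy ham haM
    let W3 : G.Walk (a' k) (Rε T) := (w' k).copy rfl hbT.symm
    let W : G.Walk d (Rε T) := W1.append (W2'.append W3)
    have hWs : ∀ x ∈ W.support, x ∉ F₂ := by
      intro x hx
      rw [SimpleGraph.Walk.mem_support_append_iff, SimpleGraph.Walk.mem_support_append_iff] at hx
      rcases hx with hx | hx | hx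
      · have hx' : x ∈ (w i n).support := by
          have := hx
          rw [SimpleGraph.Walk.support_reverse, List.mem_reverse,
            SimpleGraph.Walk.support_copy] at this
          exact this
        by_cases hxU : x ∈ U
        · have : x = b i n := hwU i n x hx' hxU
          rw [this, hbn]
          exact hdF₂
        · exact hiF₂ x (hsuppint i n x hx' hxU)
      · have hx' : x ∈ W2.support := by rwa [SimpleGraph.Walk.support_copy] at hx
        obtain ⟨j, rfl⟩ := hW2s x hx'
        exact hiF₂ _ (hspineint i j)
      · have hx' : x ∈ (w' k).support := by rwa [SimpleGraph.Walk.support_copy] at hx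
        exact hkF₂ x hx'
    -- make it a path and trim it at the first hit of Rε
    have hTd : Rε T ≠ d := fun h => hkd (hbT.symm.trans h)
    obtain ⟨x', hx'S, q, hqsub, honly, hqp⟩ :=
      StarAux.exists_suffix_walk W.bypass.reverse (Set.range Rε \ {d})
        ⟨Rε T, W.bypass.reverse.start_mem_support, ⟨⟨T, rfl⟩, hTd⟩⟩
    have hqW : ∀ x ∈ q.support, x ∈ W.support := by
      intro x hx
      have := hqsub x hx
      rw [SimpleGraph.Walk.support_reverse, List.mem_reverse] at this
      exact W.support_bypass_subset this
    obtain ⟨⟨t, hts⟩, hx'd⟩ := hx'S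
    have hx'd' : x' ≠ d := hx'd
    let A : G.Walk d (Rε t) := (q.copy hts.symm rfl).reverse
    have hAsupp : ∀ x, x ∈ A.support ↔ x ∈ q.support := by
      intro x
      rw [SimpleGraph.Walk.support_reverse, List.mem_reverse, SimpleGraph.Walk.support_copy]
    have htN : N < t := by
      by_contra hle
      have h1 : Rε t ∈ q.support := by
        rw [hts]
        exact q.start_mem_support
      have h2 : Rε t ∉ F₂ := hWs _ (hqW _ h1)
      exact h2 (hF₂N t (by omega) (hts.trans_ne hx'd'))
    refine ⟨t, htN, A, ?_, ?_, ?_⟩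
    · rw [SimpleGraph.Walk.isPath_reverse_iff, SimpleGraph.Walk.isPath_copy]
      exact hqp (SimpleGraph.Walk.bypass_isPath W).reverse
    · intro x hx hxF
      have hxW : x ∈ W.support := hqW x ((hAsupp x).mp hx)
      by_cases hxd : x = d
      · exact hdF (hxd ▸ hxF)
      · exact hWs x hxW (hF₂F x hxF hxd)
    · intro x hx hxR
      by_cases hxd : x = d
      · exact Or.inl hxd
      · right
        have := honly x ((hAsupp x).mp hx) ⟨hxR, hxd⟩
        rw [this, ← hts]
  -- the extension lemma
  have ext : ∀ (m : ℕ) (P : G.Walk (Rε 0) (Rε m)), P.IsPath →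
      (∀ j, Rε j ∈ P.support → j ≤ m) → ∀ d ∈ Dom,
      ∃ m', m < m' ∧ ∃ P' : G.Walk (Rε 0) (Rε m'), P'.IsPath ∧
        (∀ j, Rε j ∈ P'.support → j ≤ m') ∧
        (∃ Q : G.Walk (Rε m) (Rε m'), P' = P.append Q) ∧ d ∈ P'.support := by
    intro m P hP hSm d hd
    -- the generic tendril-based extension, assuming d is not yet on P and any
    -- appearance of d on Rε is before position m
    have key : d ∉ P.support → (∀ l, Rε l = d → l < m) →
        ∃ m', m < m' ∧ ∃ P' : G.Walk (Rε 0) (Rε m'), P'.IsPath ∧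
          (∀ j, Rε j ∈ P'.support → j ≤ m') ∧
          (∃ Q : G.Walk (Rε m) (Rε m'), P' = P.append Q) ∧ d ∈ P'.support := by
      intro hdP hdlow
      have hPfin : ({x | x ∈ P.support} : Set V).Finite := P.support.finite_toSet
      obtain ⟨t, htm, A, hAp, hAF, hAR⟩ := tendril d hd {x | x ∈ P.support} hPfin hdP m
      have hFB : ({x | x ∈ P.support} ∪ ({x | x ∈ A.support} \ {d}) : Set V).Finite :=
        hPfin.union (A.support.finite_toSet.diff)
      have hdFB : d ∉ ({x | x ∈ P.support} ∪ ({x | x ∈ A.support} \ {d}) : Set V) := by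
        rintro (h | h)
        · exact hdP h
        · exact h.2 rfl
      obtain ⟨s, hst, B, hBp, hBF, hBR⟩ :=
        tendril d hd ({x | x ∈ P.support} ∪ ({x | x ∈ A.support} \ {d})) hFB hdFB t
      obtain ⟨Sg, hSgp, hSgs, hSgc⟩ := seg m t htm.le
      -- the inner walk through d
      have hinner : (A.reverse.append B).IsPath := by
        refine StarAux.append_isPath hAp.reverse hBp ?_
        intro v hv1 hv2
        rw [SimpleGraph.Walk.support_reverse, List.mem_reverse] at hv1
        by_contra hvd
        exact hBF v hv2 (Or.inr ⟨hv1, hvd⟩)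
      have hAd : ∀ v ∈ A.support, v ∈ Set.range Rε → v = d ∨ v = Rε t := hAR
      let Q : G.Walk (Rε m) (Rε s) := Sg.append (A.reverse.append B)
      have hQp : Q.IsPath := by
        refine StarAux.append_isPath hSgp hinner ?_
        intro v hv1 hv2
        obtain ⟨j', hj1, hj2, rfl⟩ := hSgs v hv1
        rw [SimpleGraph.Walk.mem_support_append_iff, SimpleGraph.Walk.support_reverse,
          List.mem_reverse] at hv2
        rcases hv2 with hv2 | hv2
        · rcases hAR _ hv2 ⟨j', rfl⟩ with h' | h'
          · exact absurd (hdlow j' h') (by omega)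
          · exact h'
        · rcases hBR _ hv2 ⟨j', rfl⟩ with h' | h'
          · exact absurd (hdlow j' h') (by omega)
          · have : j' = s := hRε.1 h'
            omega
      have hQmem : ∀ v ∈ Q.support,
          v ∈ Sg.support ∨ v ∈ A.support ∨ v ∈ B.support := by
        intro v hv
        rw [SimpleGraph.Walk.mem_support_append_iff,
          SimpleGraph.Walk.mem_support_append_iff, SimpleGraph.Walk.support_reverse,
          List.mem_reverse] at hv
        tauto
      refine ⟨s, by omega, P.append Q, ?_, ?_, ⟨Q, rfl⟩, ?_⟩
      · refine StarAux.append_isPath hP hQp ?_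
        intro v hv1 hv2
        rcases hQmem v hv2 with hv | hv | hv
        · obtain ⟨j', hj1, hj2, rfl⟩ := hSgs v hv
          have := hSm j' hv1
          have : j' = m := by omega
          rw [this]
        · exact absurd hv1 (hAF v hv)
        · exact absurd (Or.inl hv1) (hBF v hv)
      · intro j hj
        rw [SimpleGraph.Walk.mem_support_append_iff] at hj
        rcases hj with hj | hj
        · have := hSm j hj; omega
        · rcases hQmem _ hj with hv | hv | hv
          · obtain ⟨j', hj1, hj2, he⟩ := hSgs _ hv
            have : j = j' := hRε.1 he
            omega
          · rcases hAR _ hv ⟨j, rfl⟩ with h' | h'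
            · have := hdlow j h'; omega
            · have : j = t := hRε.1 h'
              omega
          · rcases hBR _ hv ⟨j, rfl⟩ with h' | h'
            · have := hdlow j h'; omega
            · have : j = s := hRε.1 h'
              omega
      · rw [SimpleGraph.Walk.mem_support_append_iff]
        right
        rw [SimpleGraph.Walk.mem_support_append_iff]
        right
        rw [SimpleGraph.Walk.mem_support_append_iff]
        left
        rw [SimpleGraph.Walk.support_reverse, List.mem_reverse]
        exact A.start_mem_support
    by_cases hdP : d ∈ P.support
    · -- extend by a single edge of Rε
      have hmne : Rε m ≠ Rε (m + 1) := fun h => by simpa using hRε.1 h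
      have hQp : (SimpleGraph.Walk.cons (hRε.2 m) SimpleGraph.Walk.nil :
          G.Walk (Rε m) (Rε (m+1))).IsPath := by
        simp [SimpleGraph.Walk.isPath_def, hmne]
      refine ⟨m + 1, by omega, P.append (SimpleGraph.Walk.cons (hRε.2 m) SimpleGraph.Walk.nil),
        ?_, ?_, ⟨_, rfl⟩, ?_⟩
      · refine StarAux.append_isPath hP hQp ?_
        intro v hv1 hv2
        rcases (by simpa using hv2 : v = Rε m ∨ v = Rε (m+1)) with h' | h'
        · exact h'
        · rw [h'] at hv1
          have := hSm (m+1) hv1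
          omega
      · intro j hj
        rw [SimpleGraph.Walk.mem_support_append_iff] at hj
        rcases hj with hj | hj
        · have := hSm j hj; omega
        · rcases (by simpa using hj : Rε j = Rε m ∨ Rε j = Rε (m+1)) with h' | h'
          · have : j = m := hRε.1 h'; omega
          · have : j = m + 1 := hRε.1 h'; omega
      · rw [SimpleGraph.Walk.mem_support_append_iff]
        exact Or.inl hdP
    · by_cases hdray : ∃ l, Rε l = d
      · obtain ⟨l, hl⟩ := hdray
        have hlm : l ≠ m := by
          intro h
          exact hdP (by rw [← hl, h]; exact P.end_mem_support)
        by_cases hlt : m < l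
        · -- go along Rε up to l
          obtain ⟨Q, hQp, hQs, hQc⟩ := seg m l hlt.le
          refine ⟨l, hlt, P.append Q, ?_, ?_, ⟨Q, rfl⟩, ?_⟩
          · refine StarAux.append_isPath hP hQp ?_
            intro v hv1 hv2
            obtain ⟨j', hj1, hj2, rfl⟩ := hQs v hv2
            have := hSm j' hv1
            have : j' = m := by omega
            rw [this]
          · intro j hj
            rw [SimpleGraph.Walk.mem_support_append_iff] at hj
            rcases hj with hj | hj
            · have := hSm j hj; omega
            · obtain ⟨j', hj1, hj2, he⟩ := hQs _ hj
              have : j = j' := hRε.1 he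
              omega
          · rw [SimpleGraph.Walk.mem_support_append_iff]
            right
            rw [← hl]
            exact hQc l hlt.le le_rfl
        · refine key hdP ?_
          intro l' hl'
          have : l' = l := hRε.1 (hl'.trans hl.symm)
          omega
      · refine key hdP ?_
        intro l hl
        exact absurd ⟨l, hl⟩ hdray
  -- countably many combs have only finitely many dominating teeth
  have hbadcomb : {i : ι | ¬ ({n | b i n ∈ Dom}.Infinite)}.Countable := by
    set S : Set V := {u | u ∈ U ∧ {i : ι | ∃ n, b i n = u}.Finite} with hSdef
    have hSc : S.Countable := hU.mono fun u hu => hu.1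
    refine Set.Countable.mono ?_ (Set.Countable.biUnion hSc
      (fun u hu => hu.2.countable))
    intro i hi
    have hKfin : {n | b i n ∈ Dom}.Finite := Set.not_infinite.mp hi
    obtain ⟨n, hn⟩ := hKfin.infinite_compl.nonempty
    have hnD : b i n ∉ Dom := hn
    have hu : b i n ∈ S := by
      refine ⟨hb i n, ?_⟩
      by_contra hinf
      exact hnD ⟨hb i n, hinf⟩
    exact Set.mem_biUnion hu ⟨n, rfl⟩
  -- Dom is nonempty
  have hDomNe : Dom.Nonempty := by
    have hx : ∃ i : ι, {n | b i n ∈ Dom}.Infinite := by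
      by_contra h
      push_neg at h
      have : ({i : ι | ¬ ({n | b i n ∈ Dom}.Infinite)}) = Set.univ :=
        Set.eq_univ_of_forall fun i => Set.not_infinite.mpr (h i)
      have hcu : (Set.univ : Set ι).Countable := this ▸ hbadcomb
      have : Countable ι := Set.countable_univ_iff.mp hcu
      exact absurd Cardinal.mk_le_aleph0 (not_le.mpr hunc)
    obtain ⟨i, hi⟩ := hx
    obtain ⟨n, hn⟩ := hi.nonempty
    exact ⟨b i n, hn⟩
  obtain ⟨f, hf⟩ := hDomC.exists_eq_range hDomNe
  have hfD : ∀ k, f k ∈ Dom := fun k => hf ▸ Set.mem_range_self k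
  -- build the chain of paths
  have hchainstep : ∀ (st : Σ' (m : ℕ) (P : G.Walk (Rε 0) (Rε m)),
        P.IsPath ∧ ∀ j, Rε j ∈ P.support → j ≤ m) (k : ℕ),
      ∃ st' : (Σ' (m : ℕ) (P : G.Walk (Rε 0) (Rε m)),
        P.IsPath ∧ ∀ j, Rε j ∈ P.support → j ≤ m),
        st.1 < st'.1 ∧ st.2.1.length < st'.2.1.length ∧
        (∀ i ≤ st.2.1.length, st'.2.1.getVert i = st.2.1.getVert i) ∧
        (∀ x ∈ st.2.1.support, x ∈ st'.2.1.support) ∧ f k ∈ st'.2.1.support := by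
    rintro ⟨m, P, hP, hSm⟩ k
    obtain ⟨m', hm', P', hP'p, hP'S, ⟨Q, rfl⟩, hdmem⟩ := ext m P hP hSm (f k) (hfD k)
    have hQlen : 0 < Q.length := by
      rcases Nat.eq_zero_or_pos Q.length with h | h
      · have := SimpleGraph.Walk.eq_of_length_eq_zero h
        exact absurd (hRε.1 this) (by omega)
      · exact h
    refine ⟨⟨m', P.append Q, hP'p, hP'S⟩, hm', ?_, ?_, ?_, hdmem⟩
    · show P.length < (P.append Q).length
      rw [SimpleGraph.Walk.length_append]
      omega
    · show ∀ i ≤ P.length, (P.append Q).getVert i = P.getVert i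
      intro i hi
      rw [SimpleGraph.Walk.getVert_append]
      rcases lt_or_eq_of_le hi with h | h
      · rw [if_pos h]
      · rw [h, if_neg (lt_irrefl _), Nat.sub_self, SimpleGraph.Walk.getVert_zero,
          SimpleGraph.Walk.getVert_length]
    · show ∀ x ∈ P.support, x ∈ (P.append Q).support
      intro x hx
      rw [SimpleGraph.Walk.mem_support_append_iff]
      exact Or.inl hx
  choose nxt hlt₁ hlen₁ hgv₁ hsub₁ hcov₁ using hchainstep
  have hS₀ : ∀ j, Rε j ∈ (SimpleGraph.Walk.nil : G.Walk (Rε 0) (Rε 0)).support → j ≤ 0 := by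
    intro j hj
    have h2 : Rε j = Rε 0 := by simpa using hj
    have := hRε.1 h2
    omega
  let chain : ℕ → (Σ' (m : ℕ) (P : G.Walk (Rε 0) (Rε m)),
      P.IsPath ∧ ∀ j, Rε j ∈ P.support → j ≤ m) :=
    fun k => Nat.rec ⟨0, SimpleGraph.Walk.nil, SimpleGraph.Walk.IsPath.nil, hS₀⟩
      (fun k st => nxt st k) k
  have chainS : ∀ k, chain (k+1) = nxt (chain k) k := fun _ => rfl
  set len : ℕ → ℕ := fun k => (chain k).2.1.length with hlendef
  have hlenmono : ∀ k, len k < len (k+1) := fun k => hlen₁ (chain k) k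
  have hlenmono' : ∀ k K, k ≤ K → len k ≤ len K := by
    intro k K h
    induction h with
    | refl => exact le_rfl
    | step h ih => exact le_trans ih (le_of_lt (hlenmono _))
  have hlenge : ∀ k, k ≤ len k := by
    intro k
    induction k with
    | zero => omega
    | succ k ih => have := hlenmono k; omega
  have hstab : ∀ k K, k ≤ K → ∀ i, i ≤ len k → (chain K).2.1.getVert i = (chain k).2.1.getVert i := by
    intro k K h
    induction h with
    | refl => intro i _; rfl
    | @step K h ih =>
      intro i hi
      have h1 : (chain (K+1)).2.1.getVert i = (chain K).2.1.getVert i := by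
        rw [chainS K]
        exact hgv₁ (chain K) K i (le_trans hi (hlenmono' k K h))
      rw [h1, ih i hi]
  set R₀ : ℕ → V := fun n => (chain (n+1)).2.1.getVert n with hR₀def
  have hR₀eq : ∀ k i, i ≤ len k → (chain k).2.1.getVert i = R₀ i := by
    intro k i hi
    have h1 := hstab k (max k (i+1)) (le_max_left _ _) i hi
    have h2 := hstab (i+1) (max k (i+1)) (le_max_right _ _) i
      (by have := hlenge (i+1); omega)
    rw [← h1, h2]
  have hR₀ray : IsRay G R₀ := by
    constructor
    · intro n n' hnn'
      set K := max (n+1) (n'+1) with hK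
      have h1 : R₀ n = (chain K).2.1.getVert n := by
        rw [← hR₀eq K n (by have := hlenge K; omega)]
      have h2 : R₀ n' = (chain K).2.1.getVert n' := by
        rw [← hR₀eq K n' (by have := hlenge K; omega)]
      rw [h1, h2] at hnn'
      exact StarAux.getVert_inj (chain K).2.2.1
        (le_trans (by omega : n ≤ K) (hlenge K)) (le_trans (by omega : n' ≤ K) (hlenge K)) hnn'
    · intro n
      have h1 : R₀ n = (chain (n+2)).2.1.getVert n := by
        rw [← hR₀eq (n+2) n (by have := hlenge (n+2); omega)]
      have h2 : R₀ (n+1) = (chain (n+2)).2.1.getVert (n+1) := by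
        rw [← hR₀eq (n+2) (n+1) (by have := hlenge (n+2); omega)]
      rw [h1, h2]
      exact SimpleGraph.Walk.adj_getVert_succ _
        (lt_of_lt_of_le (by omega : n < n + 2) (hlenge (n+2)))
  have hsuppR₀ : ∀ k x, x ∈ (chain k).2.1.support → x ∈ Set.range R₀ := by
    intro k x hx
    rw [SimpleGraph.Walk.mem_support_iff_exists_getVert] at hx
    obtain ⟨i, hgv, hi⟩ := hx
    exact ⟨i, by rw [← hR₀eq k i hi, hgv]⟩
  have hDomR₀ : ∀ d ∈ Dom, d ∈ Set.range R₀ := by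
    intro d hd
    rw [hf] at hd
    obtain ⟨k, rfl⟩ := hd
    refine hsuppR₀ (k+1) _ ?_
    rw [chainS k]
    exact hcov₁ (chain k) k
  have hR₀equiv : RayEquiv G R₀ Rε := by
    set mval : ℕ → ℕ := fun k => (chain k).1 with hmval
    have hmvalmono : StrictMono mval := by
      have h1 : ∀ k, mval k < mval (k+1) := by
        intro k
        rw [hmval]
        simp only
        rw [chainS k]
        exact hlt₁ (chain k) k
      exact strictMono_nat_of_lt_succ h1
    refine ⟨fun n => Rε (mval n), fun n => Rε (mval n), fun n => SimpleGraph.Walk.nil,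
      fun n => SimpleGraph.Walk.IsPath.nil, ?_, fun n => ⟨mval n, rfl⟩, ?_⟩
    · intro n
      exact hsuppR₀ n _ (chain n).2.1.end_mem_support
    · intro m n hmn x hx hx2
      have h1 : x = Rε (mval m) := by simpa using hx
      have h2 : x = Rε (mval n) := by simpa using hx2
      exact hmn (hmvalmono.injective (hRε.1 (h1.symm.trans h2)))
  -- the large set J of good combs
  have hMc : {i : ι | ∃ x, x ∈ interior i ∧ x ∈ Set.range R₀}.Countable :=
    StarAux.countable_meets hintd (Set.countable_range R₀)
  set J : Set ι := {i | {n | b i n ∈ Dom}.Infinite ∧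
    ¬∃ x, x ∈ interior i ∧ x ∈ Set.range R₀} with hJdef
  have hJcompl : (Jᶜ : Set ι).Countable := by
    refine (hbadcomb.union hMc).mono ?_
    intro i hi
    rw [hJdef] at hi
    simp only [Set.mem_compl_iff, Set.mem_setOf_eq, not_and, not_not] at hi
    by_cases h1 : {n | b i n ∈ Dom}.Infinite
    · exact Or.inr (hi h1)
    · exact Or.inl h1
  have hJcard : #J = #ι := by
    have h1 : #J ≤ #ι := Cardinal.mk_set_le J
    have h2 : #ι ≤ #J + ℵ₀ := by
      have := Cardinal.mk_sum_compl J
      have h3 : #(Jᶜ : Set ι) ≤ ℵ₀ := by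
        have : Countable (Jᶜ : Set ι) := Set.countable_coe_iff.mpr hJcompl
        exact Cardinal.mk_le_aleph0
      calc #ι = #J + #(Jᶜ : Set ι) := this.symm
        _ ≤ #J + ℵ₀ := add_le_add_right h3 _
    have h4 : ℵ₀ ≤ #J := by
      by_contra h
      push_neg at h
      have : #ι ≤ ℵ₀ := le_trans h2 (by
        calc #J + ℵ₀ ≤ ℵ₀ + ℵ₀ := add_le_add_left h.le ℵ₀
          _ = ℵ₀ := Cardinal.aleph0_add_aleph0)
      exact absurd this (not_le.mpr hunc)
    have h5 : #ι ≤ #J := le_trans h2 (le_of_eq (Cardinal.add_eq_left h4 h4))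
    exact le_antisymm h1 h5
  -- build the families of paths for the good combs
  have hfam : ∀ i : ι, ∃ (pp qq : ℕ → V) (wq : ∀ n, G.Walk (pp n) (qq n)), i ∈ J →
      ((∀ n, (wq n).IsPath ∧ pp n ∈ Set.range (R i) ∧ qq n ∈ Set.range R₀) ∧
       (∀ n x, x ∈ (wq n).support →
         (x ≠ pp n → x ∉ Set.range (R i)) ∧ (x ≠ qq n → x ∉ Set.range R₀)) ∧
       (∀ m' n', m' ≠ n' → ∀ x ∈ (wq m').support, x ∉ (wq n').support) ∧
       (∀ n, ∃ n', qq n = b i n' ∧ ∀ x ∈ (wq n).support, x ∈ (w i n').support)) := by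
    intro i
    by_cases hi : i ∈ J
    · have hKinf : {n | b i n ∈ Dom}.Infinite := hi.1
      have hiM : ¬∃ x, x ∈ interior i ∧ x ∈ Set.range R₀ := hi.2
      let e : ℕ ↪ {n | b i n ∈ Dom} := hKinf.natEmbedding
      have he : ∀ n, b i ((e n : ℕ)) ∈ Dom := fun n => (e n).2
      have heinj : ∀ m' n', m' ≠ n' → ((e m' : ℕ)) ≠ ((e n' : ℕ)) := by
        intro m' n' h hc
        exact h (e.injective (Subtype.ext hc))
      have htrim : ∀ n : ℕ, ∃ (x' : V), x' ∈ Set.range (R i) ∧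
          ∃ q' : G.Walk x' (b i (e n : ℕ)),
          (∀ v ∈ q'.support, v ∈ (w i (e n : ℕ)).support) ∧
          (∀ v ∈ q'.support, v ∈ Set.range (R i) → v = x') ∧ q'.IsPath := by
        intro n
        obtain ⟨x', h1, q', h2, h3, h4⟩ := StarAux.exists_suffix_walk (w i (e n : ℕ))
          (Set.range (R i)) ⟨a i (e n : ℕ), (w i (e n : ℕ)).start_mem_support, ha i (e n : ℕ)⟩
        exact ⟨x', h1, q', h2, h3, h4 (hw i (e n : ℕ))⟩
      choose pf hpf wq' hsub hmeet hpath using htrim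
      refine ⟨pf, fun n => b i (e n : ℕ), wq', fun _ => ⟨?_, ?_, ?_, ?_⟩⟩
      · intro n
        exact ⟨hpath n, hpf n, hDomR₀ _ (he n)⟩
      · intro n x hx
        constructor
        · intro hxp hxr
          exact hxp (hmeet n x hx hxr)
        · intro hxq hxr
          have hxw : x ∈ (w i (e n : ℕ)).support := hsub n x hx
          by_cases hxU : x ∈ U
          · exact hxq (hwU i (e n : ℕ) x hxw hxU)
          · exact hiM ⟨x, hsuppint i (e n : ℕ) x hxw hxU, hxr⟩
      · intro m' n' hmn x hx hx2
        exact hwdisj i (e m' : ℕ) (e n' : ℕ) (heinj m' n' hmn) x (hsub m' x hx) (hsub n' x hx2)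
      · intro n
        exact ⟨(e n : ℕ), rfl, hsub n⟩
    · exact ⟨fun n => a i n, fun n => b i n, fun n => w i n, fun h => absurd h hi⟩
  choose p q ww hfam' using hfam
  -- conclude
  refine ⟨R₀, hR₀ray, hR₀equiv, J, hJcard, ?_, p, q, ww, ?_, ?_, ?_, ?_⟩
  · intro i hi n m hc
    exact hi.2 ⟨R i n, hspineint i n, hc ▸ ⟨m, rfl⟩⟩
  · intro i hi n
    exact (hfam' i hi).1 n
  · intro i hi n x hx
    exact (hfam' i hi).2.1 n x hx
  · intro i hi m n hmn
    exact (hfam' i hi).2.2.1 m n hmn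
  · intro i hi j hj hij m n x hx hx2
    obtain ⟨m', hm'1, hm'2⟩ := (hfam' i hi).2.2.2 m
    obtain ⟨n', hn'1, hn'2⟩ := (hfam' j hj).2.2.2 n
    have hxi : x ∈ (w i m').support := hm'2 x hx
    have hxj : x ∈ (w j n').support := hn'2 x hx2
    by_cases hxU : x ∈ U
    · have : x = b i m' := hwU i m' x hxi hxU
      rw [this, ← hm'1]
      exact ((hfam' i hi).1 m).2.2
    · exact absurd (hsuppint j n' x hxj hxU) (hintd i j hij x (hsuppint i m' x hxi hxU))
end

section
/- Let κ be a cardinal with cf(κ) > ℵ₁, G a graph, ε an end of G, and R a collection of κ pairwise disjoint rays belonging to ε. Then there exist a vertex set U with |U| < κ and a collection C of κ pairwise internally disjoint ε–U combs in G whose spines all lie in R. -/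
open Cardinal

universe u

namespace Stmt19Aux

variable {V : Type u} {ι : Type u}

/-- Data of a potential comb: teeth endpoints and walks. -/
structure Comb (G : SimpleGraph V) where
  a : ℕ → V
  b : ℕ → V
  w : ∀ n, G.Walk (a n) (b n)

variable (G : SimpleGraph V) (R : ι → ℕ → V)

def full (p : ι × Comb G) : Set V :=
  Set.range (R p.1) ∪ ⋃ n, {y | y ∈ (p.2.w n).support}

lemma full_countable (p : ι × Comb G) : (full G R p).Countable :=
  (Set.countable_range _).union
    (Set.countable_iUnion fun n => ((p.2.w n).support.finite_toSet).countable)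

def body (U : Set V) (p : ι × Comb G) : Set V := full G R p \ U

def Good (U : Set V) (p : ι × Comb G) : Prop :=
  (∀ n, R p.1 n ∉ U) ∧
  (∀ n, (p.2.w n).IsPath ∧ p.2.a n ∈ Set.range (R p.1) ∧ p.2.b n ∈ U) ∧
  (∀ n, ∀ x ∈ (p.2.w n).support, x ∈ U → x = p.2.b n) ∧
  (∀ m n, m ≠ n → ∀ x ∈ (p.2.w m).support, x ∉ (p.2.w n).support)

def GoodFam (U : Set V) (F : Set (ι × Comb G)) : Prop :=
  (∀ p ∈ F, Good G R U p) ∧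
  (∀ p ∈ F, ∀ q ∈ F, p.1 = q.1 → p = q) ∧
  (∀ p ∈ F, ∀ q ∈ F, p.1 ≠ q.1 → ∀ x ∈ body G R U p, x ∉ body G R U q)

lemma exists_maximal (U : Set V) : ∃ M, Maximal (GoodFam G R U) M := by
  have := zorn_subset {F : Set (ι × Comb G) | GoodFam G R U F} ?_
  · obtain ⟨M, hM⟩ := this; exact ⟨M, hM⟩
  · intro c hc hchain
    refine ⟨⋃₀ c, ⟨?_, ?_, ?_⟩, fun s hs => Set.subset_sUnion_of_mem hs⟩
    · rintro p ⟨F, hF, hp⟩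
      exact (hc hF).1 p hp
    · rintro p ⟨F, hF, hp⟩ q ⟨F', hF', hq⟩ hpq
      rcases hchain.total hF hF' with h | h
      · exact (hc hF').2.1 p (h hp) q hq hpq
      · exact (hc hF).2.1 p hp q (h hq) hpq
    · rintro p ⟨F, hF, hp⟩ q ⟨F', hF', hq⟩ hpq
      rcases hchain.total hF hF' with h | h
      · exact (hc hF').2.2 p (h hp) q hq hpq
      · exact (hc hF).2.2 p hp q (h hq) hpq

noncomputable def maxFam (U : Set V) : Set (ι × Comb G) :=
  (exists_maximal G R U).choose

lemma maxFam_spec (U : Set V) : Maximal (GoodFam G R U) (maxFam G R U) :=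
  (exists_maximal G R U).choose_spec

noncomputable def stepS (U : Set V) : Set V :=
  U ∪ ⋃ p ∈ maxFam G R U, full G R p

lemma subset_stepS (U : Set V) : U ⊆ stepS G R U := Set.subset_union_left

lemma full_subset_stepS {U : Set V} {p : ι × Comb G} (hp : p ∈ maxFam G R U) :
    full G R p ⊆ stepS G R U :=
  Set.subset_union_of_subset_right (Set.subset_biUnion_of_mem hp) _

variable (Rε : ℕ → V)

noncomputable def Fch : Ordinal.{u} → Set V :=
  Ordinal.lt_wf.fix (C := fun _ => Set V) fun o rec =>
    Set.range Rε ∪ ⋃ o' : Set.Iio o, stepS G R (rec o'.1 o'.2)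

lemma Fch_eq (o : Ordinal.{u}) :
    Fch G R Rε o = Set.range Rε ∪ ⋃ o' : Set.Iio o, stepS G R (Fch G R Rε o'.1) := by
  rw [Fch, WellFounded.fix_eq]

lemma range_subset_Fch (o : Ordinal.{u}) : Set.range Rε ⊆ Fch G R Rε o := by
  rw [Fch_eq]; exact Set.subset_union_left

lemma stepS_subset_Fch {o o' : Ordinal.{u}} (h : o < o') :
    stepS G R (Fch G R Rε o) ⊆ Fch G R Rε o' := by
  rw [Fch_eq G R Rε o']
  exact Set.subset_union_of_subset_right
    (Set.subset_iUnion (fun o'' : Set.Iio o' => stepS G R (Fch G R Rε o''.1)) ⟨o, h⟩) _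

lemma Fch_mono {o o' : Ordinal.{u}} (h : o ≤ o') : Fch G R Rε o ⊆ Fch G R Rε o' := by
  rw [Fch_eq G R Rε o]
  refine Set.union_subset (range_subset_Fch G R Rε o') ?_
  exact Set.iUnion_subset fun o'' => stepS_subset_Fch G R Rε (lt_of_lt_of_le o''.2 h)


lemma mk_stepS_le (U : Set V) :
    #(stepS G R U) ≤ #U + #(maxFam G R U) * ℵ₀ := by
  refine (mk_union_le _ _).trans (add_le_add_right ?_ _)
  rw [Set.biUnion_eq_iUnion]
  refine (mk_iUnion_le _).trans ?_
  refine mul_le_mul' le_rfl (ciSup_le' fun p => ?_)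
  have : (full G R p.1).Countable := full_countable G R p.1
  exact @mk_le_aleph0 _ (this.to_subtype)

lemma mk_maxFam_le (U : Set V) : #(maxFam G R U) ≤ #ι := by
  have h := (maxFam_spec G R U).1.2.1
  refine mk_le_of_injective (f := fun p : maxFam G R U => p.1.1) ?_
  intro p q hpq
  exact Subtype.ext (h p.1 p.2 q.1 q.2 hpq)

lemma mk_Fch_lt {kap : Cardinal.{u}} (hcof : aleph 1 < kap.ord.cof)
    (o : Ordinal.{u}) (hoc : o.card ≤ aleph 1)
    (hfam : ∀ o' < o, #(maxFam G R (Fch G R Rε o')) < kap) :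
    #(Fch G R Rε o) < kap := by
  have hk1 : aleph 1 < kap := hcof.trans_le ((Ordinal.cof_le_card _).trans_eq (card_ord _))
  have hk0 : ℵ₀ < kap := aleph0_lt_aleph_one.trans hk1
  induction o using Ordinal.induction with
  | _ o IH =>
    rw [Fch_eq]
    refine (mk_union_le _ _).trans_lt (add_lt_of_lt hk0.le
      ((@mk_le_aleph0 _ (Set.countable_range Rε).to_subtype).trans_lt hk0) ?_)
    have hsur := ((Ordinal.ToType.mk (o := o)).symm.toEquiv.surjective).iUnion_comp
      (g := fun o' : Set.Iio o => stepS G R (Fch G R Rε o'.1))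
    rw [← hsur]
    have hidx : #o.ToType < kap.ord.cof := by
      rw [mk_toType]; exact lt_of_le_of_lt hoc hcof
    refine (mk_iUnion_le _).trans_lt (mul_lt_of_lt hk0.le
      (hidx.trans_le ((Ordinal.cof_le_card _).trans_eq (card_ord _))) ?_)
    refine Ordinal.iSup_lt hidx fun t => ?_
    set o' : Ordinal.{u} := ((Ordinal.ToType.mk (o := o)).symm.toEquiv t : Set.Iio o).1 with ho'
    have ho'lt : o' < o := ((Ordinal.ToType.mk (o := o)).symm.toEquiv t).2
    have hfam' : #(maxFam G R (Fch G R Rε o')) < kap := hfam o' ho'lt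
    have hF' : #(Fch G R Rε o') < kap :=
      IH o' ho'lt ((Ordinal.card_le_card ho'lt.le).trans hoc) fun o'' h'' => hfam o'' (h''.trans ho'lt)
    exact (mk_stepS_le G R _).trans_lt (add_lt_of_lt hk0.le hF'
      (mul_lt_of_lt hk0.le hfam' hk0))


open SimpleGraph in
lemma trunc (U : Set V) : ∀ {x y : V} (p : G.Walk x y), y ∈ U → p.IsPath →
    ∃ (c : V) (q : G.Walk x c), c ∈ U ∧ q.IsPath ∧
      (∀ z ∈ q.support, z ∈ p.support) ∧ (∀ z ∈ q.support, z ∈ U → z = c) := by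
  intro x y p
  induction p with
  | nil =>
    intro hy _
    exact ⟨_, Walk.nil, hy, Walk.IsPath.nil, fun z hz => hz, fun z hz _ => by simpa using hz⟩
  | @cons u v yy h p ih =>
    intro hy hp
    by_cases hu : u ∈ U
    · refine ⟨u, Walk.nil, hu, Walk.IsPath.nil, ?_, fun z hz _ => by simpa using hz⟩
      intro z hz
      have : z = u := by simpa using hz
      subst this; exact Walk.start_mem_support _
    · obtain ⟨hp', hunot⟩ := (Walk.cons_isPath_iff h p).mp hp
      obtain ⟨c, q, hcU, hq, hsub, hfirst⟩ := ih hy hp'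
      refine ⟨c, Walk.cons h q, hcU, ?_, ?_, ?_⟩
      · exact (Walk.cons_isPath_iff h q).mpr ⟨hq, fun hx => hunot (hsub _ hx)⟩
      · intro z hz
        rw [Walk.support_cons] at hz ⊢
        rcases List.mem_cons.mp hz with rfl | hz
        · exact List.mem_cons_self
        · exact List.mem_cons_of_mem _ (hsub _ hz)
      · intro z hz hzU
        rw [Walk.support_cons] at hz
        rcases List.mem_cons.mp hz with rfl | hz
        · exact absurd hzU hu
        · exact hfirst _ hz hzU

end Stmt19Aux

theorem stmt_19 {V : Type u} (G : SimpleGraph V) (kap : Cardinal.{u})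
    (hcof : Cardinal.aleph 1 < kap.ord.cof)
    -- an end ε of G, represented by a ray Rε
    (Rε : ℕ → V) (hRε : IsRay G Rε)
    -- a collection of κ pairwise disjoint rays belonging to ε
    (ι : Type u) (hι : #ι = kap)
    (R : ι → ℕ → V) (hR : ∀ i, IsRay G (R i))
    (hRend : ∀ i, RayEquiv G (R i) Rε)
    (hdisj : ∀ i j, i ≠ j → ∀ n m : ℕ, R i n ≠ R j m) :
    -- then there are a vertex set U of size < κ and κ many internally disjoint
    -- ε–U combs whose spines all lie in the given collection:
    ∃ U : Set V, #U < kap ∧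
      ∃ J : Set ι, #J = kap ∧
        ∃ (a b : ι → ℕ → V) (w : ∀ i n, G.Walk (a i n) (b i n)),
          -- each chosen ray is the spine of a comb: it avoids U and carries an
          -- infinite family of disjoint paths to U, meeting U only in their teeth
          (∀ i ∈ J, ∀ n : ℕ, R i n ∉ U) ∧
          (∀ i ∈ J, ∀ n, (w i n).IsPath ∧ a i n ∈ Set.range (R i) ∧ b i n ∈ U) ∧
          (∀ i ∈ J, ∀ n, ∀ x ∈ (w i n).support, x ∈ U → x = b i n) ∧
          (∀ i ∈ J, ∀ m n : ℕ, m ≠ n → ∀ x ∈ (w i m).support, x ∉ (w i n).support) ∧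
          -- the combs are internally disjoint
          (∀ i ∈ J, ∀ j ∈ J, i ≠ j → ∀ x : V,
            x ∈ (Set.range (R i) ∪ ⋃ n, {y | y ∈ (w i n).support}) \ U →
            x ∉ (Set.range (R j) ∪ ⋃ n, {y | y ∈ (w j n).support}) \ U) := by
  classical
  have hk1 : aleph 1 < kap := hcof.trans_le ((Ordinal.cof_le_card _).trans_eq (card_ord _))
  have hk0 : ℵ₀ < kap := aleph0_lt_aleph_one.trans hk1
  have hmaxle : ∀ o : Ordinal.{u},
      #(Stmt19Aux.maxFam G R (Stmt19Aux.Fch G R Rε o)) ≤ kap :=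
    fun o => (Stmt19Aux.mk_maxFam_le G R _).trans_eq hι
  by_cases hsucc : ∃ o, o < (aleph 1).ord ∧
      #(Stmt19Aux.maxFam G R (Stmt19Aux.Fch G R Rε o)) = kap
  · -- success case
    have hne : {o : Ordinal.{u} | o < (aleph 1).ord ∧
        #(Stmt19Aux.maxFam G R (Stmt19Aux.Fch G R Rε o)) = kap}.Nonempty := hsucc
    set o := Ordinal.lt_wf.min _ hne with ho
    have hom := Ordinal.lt_wf.min_mem _ hne
    have hfam : ∀ o' < o, #(Stmt19Aux.maxFam G R (Stmt19Aux.Fch G R Rε o')) < kap := by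
      intro o' h'
      refine lt_of_le_of_ne (hmaxle o') fun hc => ?_
      exact Ordinal.lt_wf.not_lt_min {o : Ordinal.{u} | o < (aleph 1).ord ∧
        #(Stmt19Aux.maxFam G R (Stmt19Aux.Fch G R Rε o)) = kap} ⟨h'.trans hom.1, hc⟩ h'
    have hUlt : #(Stmt19Aux.Fch G R Rε o) < kap :=
      Stmt19Aux.mk_Fch_lt G R Rε hcof o (lt_ord.mp hom.1).le hfam
    have hMF := Stmt19Aux.maxFam_spec G R (Stmt19Aux.Fch G R Rε o)
    refine ⟨Stmt19Aux.Fch G R Rε o, hUlt,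
      Prod.fst '' Stmt19Aux.maxFam G R (Stmt19Aux.Fch G R Rε o), ?_, ?_⟩
    · rw [mk_image_eq_of_injOn]
      · exact hom.2
      · intro p hp q hq h
        exact hMF.1.2.1 p hp q hq h
    · have hex : ∀ i ∈ Prod.fst '' Stmt19Aux.maxFam G R (Stmt19Aux.Fch G R Rε o),
          ∃ c : Stmt19Aux.Comb G, (i, c) ∈ Stmt19Aux.maxFam G R (Stmt19Aux.Fch G R Rε o) := by
        rintro i ⟨p, hp, rfl⟩
        exact ⟨p.2, by simpa using hp⟩
      haveI : Nonempty (Stmt19Aux.Comb G) :=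
        ⟨⟨fun _ => Rε 0, fun _ => Rε 0, fun _ => SimpleGraph.Walk.nil⟩⟩
      choose! pk hpk using hex
      refine ⟨fun i => (pk i).a, fun i => (pk i).b, fun i n => (pk i).w n,
        ?_, ?_, ?_, ?_, ?_⟩
      · intro i hi n
        exact (hMF.1.1 _ (hpk i hi)).1 n
      · intro i hi n
        exact (hMF.1.1 _ (hpk i hi)).2.1 n
      · intro i hi n
        exact (hMF.1.1 _ (hpk i hi)).2.2.1 n
      · intro i hi m n
        exact (hMF.1.1 _ (hpk i hi)).2.2.2 m n
      · intro i hi j hj hij x hx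
        exact hMF.1.2.2 (i, pk i) (hpk i hi) (j, pk j) (hpk j hj) hij x hx
  · -- failure case: derive a contradiction
    exfalso
    have hfam : ∀ o' < (aleph 1).ord,
        #(Stmt19Aux.maxFam G R (Stmt19Aux.Fch G R Rε o')) < kap := by
      intro o' h'
      exact lt_of_le_of_ne (hmaxle o') fun hc => hsucc ⟨o', h', hc⟩
    have hFull : #(Stmt19Aux.Fch G R Rε (aleph 1).ord) < kap :=
      Stmt19Aux.mk_Fch_lt G R Rε hcof _ (card_ord _).le hfam
    have hstar : ∃ i, ∀ n, R i n ∉ Stmt19Aux.Fch G R Rε (aleph 1).ord := by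
      by_contra hcon
      push_neg at hcon
      choose nn hnn using hcon
      have hinj : Function.Injective
          (fun i => (⟨R i (nn i), hnn i⟩ : Stmt19Aux.Fch G R Rε (aleph 1).ord)) := by
        intro i j hij
        by_contra hne
        exact hdisj i j hne (nn i) (nn j) (congrArg Subtype.val hij)
      exact absurd (hι ▸ mk_le_of_injective hinj) (not_le.mpr hFull)
    obtain ⟨iS, hiS⟩ := hstar
    obtain ⟨A, B, W, hWp, hWa, hWb, hWd⟩ := hRend iS
    have hScount : (Set.range (R iS) ∪ ⋃ n, {y | y ∈ (W n).support}).Countable :=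
      (Set.countable_range _).union
        (Set.countable_iUnion fun n => ((W n).support.finite_toSet).countable)
    have key : ∀ o : Set.Iio (aleph 1).ord,
        ∃ x, x ∈ Set.range (R iS) ∪ ⋃ n, {y | y ∈ (W n).support} ∧
          x ∈ Stmt19Aux.Fch G R Rε (Order.succ o.1) ∧ x ∉ Stmt19Aux.Fch G R Rε o.1 := by
      rintro ⟨o, ho⟩
      have hBU : ∀ n, B n ∈ Stmt19Aux.Fch G R Rε o :=
        fun n => Stmt19Aux.range_subset_Fch G R Rε o (hWb n)
      have htr := fun n => Stmt19Aux.trunc G (Stmt19Aux.Fch G R Rε o) (W n) (hBU n) (hWp n)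
      choose c q hcF hqp hqsub hqfirst using htr
      have hPgood : Stmt19Aux.Good G R (Stmt19Aux.Fch G R Rε o) (iS, ⟨A, c, q⟩) := by
        refine ⟨fun n hmem => hiS n (Stmt19Aux.Fch_mono G R Rε (le_of_lt ho) hmem),
          fun n => ⟨hqp n, hWa n, hcF n⟩, hqfirst, ?_⟩
        intro m n hmn x hxm hxn
        exact hWd m n hmn x (hqsub m x hxm) (hqsub n x hxn)
      have hinotin : ∀ cc : Stmt19Aux.Comb G,
          (iS, cc) ∉ Stmt19Aux.maxFam G R (Stmt19Aux.Fch G R Rε o) := by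
        intro cc hcc
        have hsub : Set.range (R iS) ⊆ Stmt19Aux.Fch G R Rε (aleph 1).ord := by
          have h1 := Stmt19Aux.full_subset_stepS G R hcc
          have h2 := Stmt19Aux.stepS_subset_Fch G R Rε (Order.lt_succ o)
          have h3 := Stmt19Aux.Fch_mono G R Rε
            ((isSuccLimit_ord (aleph0_le_aleph 1)).succ_lt ho).le
          exact (Set.subset_union_left.trans h1).trans (h2.trans h3)
        exact hiS 0 (hsub ⟨0, rfl⟩)
      by_contra hcon
      push_neg at hcon
      have hMF := Stmt19Aux.maxFam_spec G R (Stmt19Aux.Fch G R Rε o)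
      obtain ⟨h1, h2, h3⟩ := hMF.1
      have hbodyP : Stmt19Aux.body G R (Stmt19Aux.Fch G R Rε o) (iS, ⟨A, c, q⟩) ⊆
          {x | x ∈ Set.range (R iS) ∪ ⋃ n, {y | y ∈ (W n).support}} := by
        rintro x ⟨hx1, _⟩
        rcases hx1 with hx1 | hx1
        · exact Or.inl hx1
        · obtain ⟨s, ⟨n, rfl⟩, hxs⟩ := hx1
          exact Or.inr (Set.mem_iUnion.mpr ⟨n, hqsub n x hxs⟩)
      have hPdisj : ∀ p ∈ Stmt19Aux.maxFam G R (Stmt19Aux.Fch G R Rε o),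
          ∀ x ∈ Stmt19Aux.body G R (Stmt19Aux.Fch G R Rε o) (iS, ⟨A, c, q⟩),
            x ∉ Stmt19Aux.body G R (Stmt19Aux.Fch G R Rε o) p := by
        intro p hp x hxP hxp
        have hxS := hbodyP hxP
        have hxsucc : x ∈ Stmt19Aux.Fch G R Rε (Order.succ o) :=
          Stmt19Aux.stepS_subset_Fch G R Rε (Order.lt_succ o)
            (Stmt19Aux.full_subset_stepS G R hp hxp.1)
        exact hxp.2 (hcon x hxS hxsucc)
      have hGF : Stmt19Aux.GoodFam G R (Stmt19Aux.Fch G R Rε o)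
          (insert (iS, ⟨A, c, q⟩) (Stmt19Aux.maxFam G R (Stmt19Aux.Fch G R Rε o))) := by
        refine ⟨?_, ?_, ?_⟩
        · rintro p (rfl | hp)
          · exact hPgood
          · exact h1 p hp
        · rintro p (rfl | hp) q' (rfl | hq)
          · intro _; rfl
          · intro hfst
            exact absurd hq (by rw [show q' = (iS, q'.2) from Prod.ext hfst.symm rfl]; exact hinotin q'.2)
          · intro hfst
            exact absurd hp (by rw [show p = (iS, p.2) from Prod.ext hfst rfl]; exact hinotin p.2)
          · exact h2 p hp q' hq
        · rintro p (rfl | hp) q' (rfl | hq)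
          · intro hfst; exact absurd rfl hfst
          · intro _ x hxP hxq
            exact hPdisj q' hq x hxP hxq
          · intro _ x hxp hxP
            exact hPdisj p hp x hxP hxp
          · exact h3 p hp q' hq
      have hsubM := hMF.2 hGF (Set.subset_insert _ _)
      exact hinotin _ (hsubM (Set.mem_insert _ _))
    choose v hvS hvsucc hvnot using key
    have hvinj : Function.Injective v := by
      intro p p' hvv
      rcases lt_trichotomy p.1 p'.1 with hlt | heq | hlt
      · exact absurd (Stmt19Aux.Fch_mono G R Rε (Order.succ_le_of_lt hlt) (hvsucc p))
          (hvv ▸ hvnot p')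
      · exact Subtype.ext heq
      · exact absurd (Stmt19Aux.Fch_mono G R Rε (Order.succ_le_of_lt hlt) (hvsucc p'))
          (hvv ▸ hvnot p)
    have hbig : aleph 1 ≤ #(Set.range (R iS) ∪ ⋃ n, {y | y ∈ (W n).support} : Set V) := by
      have hginj : Function.Injective (fun t : ((aleph 1).ord).ToType =>
          (⟨v ((Ordinal.ToType.mk (o := _)).symm t), hvS _⟩ :
            (Set.range (R iS) ∪ ⋃ n, {y | y ∈ (W n).support} : Set V))) := by
        intro t t' h
        exact (Ordinal.ToType.mk (o := _)).symm.injective (hvinj (Subtype.ext_iff.mp h))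
      have := mk_le_of_injective hginj
      rwa [mk_toType, card_ord] at this
    exact absurd (hbig.trans (@mk_le_aleph0 _ hScount.to_subtype)) (not_le.mpr aleph0_lt_aleph_one)
end
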